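/- arXiv:2307.02444 — 10 statements merged into one kernel-verified Lean document; each statement's English description precedes it below -/
import Mathlib

section
/- Let P be a finite poset, let T ⊆ H_P be a line connected subgraph that is a tree, let P_T be the sub-poset generated by T, and let M be a kP-module whose gradient vanishes on T (i.e. there is a natural isomorphism β*(M_T) ≅ φ*(M_T)). Then there exists a family of k-linear isomorphisms α_{u,v} : M(u) → M(v), one for each ordered pair of elements u, v of P_T, such that α_{u,u} = id_{M(u)} for all u, α_{v,w} ∘ α_{u,v} = α_{u,w} for all u, v, w, and for every pair of covering relations u ⋖ w and s ⋖ t in P_T one has α_{w,t} ∘ M(u ≤ w) = M(s ≤ t) ∘ α_{u,s}. -/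
/-!
STATEMENT 0: If a `kP`-module `M` has vanishing gradient on a line connected tree
`T ⊆ H_P`, then there is a coherent family of isomorphisms `α_{u,v} : M(u) ≃ M(v)`
(for `u, v` in the sub-poset `P_T`) compatible with `M` on covering relations of `P_T`.
-/

/-- A `kP`-module: a functor from the poset `P` to finite dimensional
`k`-vector spaces, given by concrete data. -/
structure PModule (k : Type) (P : Type) [Field k] [Preorder P] where
  V : P → Type
  [acg : ∀ x, AddCommGroup (V x)]
  [mod : ∀ x, Module k (V x)]
  [fd : ∀ x, FiniteDimensional k (V x)]
  map : ∀ {x y : P}, x ≤ y → (V x →ₗ[k] V y)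
  map_id : ∀ x : P, map (le_refl x) = LinearMap.id
  map_comp : ∀ {x y z : P} (h₁ : x ≤ y) (h₂ : y ≤ z), map (h₁.trans h₂) = (map h₂).comp (map h₁)

attribute [instance] PModule.acg PModule.mod PModule.fd

/-- The order relation of the sub-poset `P_T` generated by the edge set `Te` on the
vertex set `Tv`: the reflexive-transitive closure of the edge relation of `T`. -/
def ptle {P : Type} [PartialOrder P] (Tv : Set P) (Te : Set (P × P)) (a b : ↥Tv) : Prop :=
  Relation.ReflTransGen (fun x y : ↥Tv => ((x : P), (y : P)) ∈ Te) a b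

/-- The strict order relation of the sub-poset `P_T`. -/
def ptlt {P : Type} [PartialOrder P] (Tv : Set P) (Te : Set (P × P)) (a b : ↥Tv) : Prop :=
  ptle Tv Te a b ∧ ¬ ptle Tv Te b a

/-- The covering relation of the sub-poset `P_T`. -/
def ptcov {P : Type} [PartialOrder P] (Tv : Set P) (Te : Set (P × P)) (a b : ↥Tv) : Prop :=
  ptlt Tv Te a b ∧ ∀ c : ↥Tv, ptlt Tv Te a c → ¬ ptlt Tv Te c b

/-- The order relation of the line poset of `P_T`, whose elements are the edges of `T`:
`e ≤ f` iff there is a chain of consecutive edges from `e` to `f`. -/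
def tline {P : Type} [PartialOrder P] (Te : Set (P × P)) (e f : ↥Te) : Prop :=
  Relation.ReflTransGen (fun a b : ↥Te => (a : P × P).2 = (b : P × P).1) e f

section Aux

variable {k P : Type} [Field k] [PartialOrder P] {Tv : Set P} {Te : Set (P × P)}

/-- The underlying undirected graph of `T`, on the vertex set `Tv`. -/
abbrev tgraph (Tv : Set P) (Te : Set (P × P)) : SimpleGraph ↥Tv :=
  SimpleGraph.fromRel (fun a b : ↥Tv => ((a : P), (b : P)) ∈ Te)

variable (M : PModule k P) (α₀ : ∀ e : ↥Te, (M.V (e : P × P).1 ≃ₗ[k] M.V (e : P × P).2))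

open Classical in
/-- The elementary isomorphism along an (unoriented) edge of `T`. -/
noncomputable def stepEquiv (a b : ↥Tv)
    (h : ((a : P), (b : P)) ∈ Te ∨ ((b : P), (a : P)) ∈ Te) :
    M.V (a : P) ≃ₗ[k] M.V (b : P) :=
  if h1 : ((a : P), (b : P)) ∈ Te then α₀ ⟨((a : P), (b : P)), h1⟩
  else (α₀ ⟨((b : P), (a : P)), h.resolve_left h1⟩).symm

theorem stepEquiv_mem (a b : ↥Tv) (hab : ((a : P), (b : P)) ∈ Te) :
    stepEquiv M α₀ a b (Or.inl hab) = α₀ ⟨((a : P), (b : P)), hab⟩ := dif_pos hab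

theorem stepEquiv_symm (hnb : ∀ x y : P, (x, y) ∈ Te → (y, x) ∈ Te → False)
    (a b : ↥Tv) (h : ((a : P), (b : P)) ∈ Te ∨ ((b : P), (a : P)) ∈ Te) :
    stepEquiv M α₀ b a (Or.symm h) = (stepEquiv M α₀ a b h).symm := by
  by_cases h1 : ((a : P), (b : P)) ∈ Te
  · have h2 : ¬ ((b : P), (a : P)) ∈ Te := fun h2 => hnb _ _ h1 h2
    rw [stepEquiv, stepEquiv, dif_neg h2, dif_pos h1]
  · have h2 : ((b : P), (a : P)) ∈ Te := h.resolve_left h1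
    rw [stepEquiv, stepEquiv, dif_pos h2, dif_neg h1, LinearEquiv.symm_symm]

/-- Composite isomorphism along a walk in `T`. -/
noncomputable def wcomp : ∀ {x y : ↥Tv}, (tgraph Tv Te).Walk x y →
    (M.V (x : P) ≃ₗ[k] M.V (y : P))
  | _, _, SimpleGraph.Walk.nil => LinearEquiv.refl k _
  | _, _, SimpleGraph.Walk.cons h q =>
      (stepEquiv M α₀ _ _ (((SimpleGraph.fromRel_adj _ _ _).mp h).2)).trans (wcomp q)

theorem wcomp_append {x y z : ↥Tv} (p : (tgraph Tv Te).Walk x y) (q : (tgraph Tv Te).Walk y z) :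
    wcomp M α₀ (p.append q) = (wcomp M α₀ p).trans (wcomp M α₀ q) := by
  induction p with
  | nil => rw [SimpleGraph.Walk.nil_append, wcomp, LinearEquiv.refl_trans]
  | cons h p ih =>
      rw [SimpleGraph.Walk.cons_append, wcomp, wcomp, ih]
      ext v
      simp [LinearEquiv.trans_apply]

theorem wcomp_concat {x y z : ↥Tv} (p : (tgraph Tv Te).Walk x y) (h : (tgraph Tv Te).Adj y z) :
    wcomp M α₀ (p.concat h) =
      (wcomp M α₀ p).trans (stepEquiv M α₀ _ _ ((SimpleGraph.fromRel_adj _ _ _).mp h).2) := by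
  rw [SimpleGraph.Walk.concat_eq_append, wcomp_append]
  congr 1

set_option linter.unusedSectionVars false in
theorem concat_isPath {x y z : ↥Tv} {p : (tgraph Tv Te).Walk x y} (hp : p.IsPath)
    (hz : z ∉ p.support) (h : (tgraph Tv Te).Adj y z) : (p.concat h).IsPath := by
  rw [← SimpleGraph.Walk.isPath_reverse_iff, SimpleGraph.Walk.reverse_concat]
  exact (SimpleGraph.Walk.cons_isPath_iff _ _).2
    ⟨hp.reverse, by simpa [SimpleGraph.Walk.support_reverse] using hz⟩

end Aux

theorem statement0 (k : Type) [Field k] (P : Type) [Fintype P] [PartialOrder P]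
    (Tv : Set P) (Te : Set (P × P))
    -- `T` is a subgraph of the Hasse diagram `H_P`, with vertex set `Tv` and edge set `Te`
    (hTe : ∀ e ∈ Te, (e.1 ⋖ e.2) ∧ e.1 ∈ Tv ∧ e.2 ∈ Tv)
    -- `T` is a tree: its underlying undirected graph is connected and acyclic
    (htree : (SimpleGraph.fromRel (fun a b : ↥Tv => ((a : P), (b : P)) ∈ Te)).IsTree)
    -- `T` is line connected: the line digraph of `T` is connected as an undirected graph
    (hlc : (SimpleGraph.fromRel (fun e f : ↥Te => (e : P × P).2 = (f : P × P).1)).Connected)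
    (M : PModule k P)
    -- the gradient of `M` vanishes on `T`: a natural isomorphism `β*(M_T) ≅ φ*(M_T)`
    (hgrad : ∃ α : ∀ e : ↥Te, (M.V (e : P × P).1 ≃ₗ[k] M.V (e : P × P).2),
      ∀ (e f : ↥Te), tline Te e f →
        ∀ (h1 : (e : P × P).1 ≤ (f : P × P).1) (h2 : (e : P × P).2 ≤ (f : P × P).2),
          (α f).toLinearMap.comp (M.map h1) = (M.map h2).comp (α e).toLinearMap) :
    -- conclusion: a coherent family of isomorphisms
    ∃ α : ∀ u v : ↥Tv, (M.V (u : P) ≃ₗ[k] M.V (v : P)),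
      (∀ u : ↥Tv, α u u = LinearEquiv.refl k (M.V (u : P))) ∧
      (∀ u v w : ↥Tv, (α u v).trans (α v w) = α u w) ∧
      (∀ u w s t : ↥Tv, ptcov Tv Te u w → ptcov Tv Te s t →
        ∀ (h1 : (u : P) ≤ (w : P)) (h2 : (s : P) ≤ (t : P)),
          (α w t).toLinearMap.comp (M.map h1) = (M.map h2).comp ((α u s).toLinearMap)) := by
  classical
  obtain ⟨α₀, hnat⟩ := hgrad
  -- basic order facts
  have hnb : ∀ x y : P, (x, y) ∈ Te → (y, x) ∈ Te → False := fun x y h1 h2 =>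
    ((hTe _ h1).1.lt).not_gt ((hTe _ h2).1.lt)
  have hle_of : ∀ a b : ↥Tv, ptle Tv Te a b → (a : P) ≤ (b : P) := by
    intro a b h
    have h' : Relation.ReflTransGen (fun x y : ↥Tv => ((x : P), (y : P)) ∈ Te) a b := h
    clear h
    induction h' with
    | refl => exact le_refl _
    | tail _ e ih => exact ih.trans (hTe _ e).1.le
  have hcov_edge : ∀ u w : ↥Tv, ptcov Tv Te u w → ((u : P), (w : P)) ∈ Te := by
    rintro u w ⟨⟨hle, hnle⟩, hmax⟩
    rcases Relation.ReflTransGen.cases_head hle with heq | ⟨c, hc, hcw⟩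
    · exact absurd (heq ▸ Relation.ReflTransGen.refl) hnle
    · by_cases hcw' : c = w
      · exact hcw' ▸ hc
      · exfalso
        refine hmax c ⟨Relation.ReflTransGen.single hc, fun h => ?_⟩
          ⟨hcw, fun h => ?_⟩
        · exact ((hTe _ hc).1.lt).not_ge (hle_of _ _ h)
        · have hlt : (c : P) < (w : P) :=
            lt_of_le_of_ne (hle_of _ _ hcw) (fun hh => hcw' (Subtype.ext hh))
          exact hlt.not_ge (hle_of _ _ h)
  -- the tree and its unique paths
  have hne : Nonempty ↥Tv := htree.isConnected.nonempty
  obtain ⟨r⟩ := hne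
  choose p hp hpu using fun u => htree.existsUnique_path r u
  let θ : ∀ u : ↥Tv, M.V (r : P) ≃ₗ[k] M.V (u : P) := fun u => wcomp M α₀ (p u)
  -- the key edge computation
  have hA_step : ∀ (a b : ↥Tv) (h : ((a : P), (b : P)) ∈ Te ∨ ((b : P), (a : P)) ∈ Te),
      (θ a).symm.trans (θ b) = stepEquiv M α₀ a b h := by
    intro a b h
    have hne2 : a ≠ b := by
      rcases h with h | h
      · exact fun he => (hTe _ h).1.lt.ne (congrArg Subtype.val he)
      · exact fun he => (hTe _ h).1.lt.ne (congrArg Subtype.val he.symm)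
    have hadj : (tgraph Tv Te).Adj a b := (SimpleGraph.fromRel_adj _ _ _).mpr ⟨hne2, h⟩
    by_cases hb : b ∈ (p a).support
    · have h1 : (p a).takeUntil b hb = p b := hpu b _ ((hp a).takeUntil hb)
      have h2 : (p a).dropUntil b hb = SimpleGraph.Walk.cons hadj.symm SimpleGraph.Walk.nil := by
        refine (htree.existsUnique_path b a).unique ((hp a).dropUntil hb) ?_
        exact (SimpleGraph.Walk.cons_isPath_iff _ _).2
          ⟨SimpleGraph.Walk.IsPath.nil, by simpa using hne2.symm⟩
      have h3 : p a = (p b).append (SimpleGraph.Walk.cons hadj.symm SimpleGraph.Walk.nil) := by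
        rw [← h1, ← h2]; exact ((p a).take_spec hb).symm
      have h4 : θ a = (θ b).trans (stepEquiv M α₀ b a (Or.symm h)) := by
        show wcomp M α₀ (p a) = _
        rw [h3, wcomp_append]
        congr 1
      rw [show (θ a).symm.trans (θ b) = _ from rfl, h4, stepEquiv_symm M α₀ hnb a b h]
      ext v
      simp [LinearEquiv.trans_apply]
    · have hq : ((p a).concat hadj).IsPath := concat_isPath (hp a) hb hadj
      have h1 : (p a).concat hadj = p b := hpu b _ hq
      have h4 : θ b = (θ a).trans (stepEquiv M α₀ a b h) := by
        show wcomp M α₀ (p b) = _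
        rw [← h1, wcomp_concat]
      rw [h4]
      ext v
      simp [LinearEquiv.trans_apply]
  -- the base case of naturality, for two consecutive edges of `T`
  have hbase : ∀ (a b d : ↥Tv) (hab : ((a : P), (b : P)) ∈ Te) (hbd : ((b : P), (d : P)) ∈ Te)
      (hle1 : (a : P) ≤ (b : P)) (hle2 : (b : P) ≤ (d : P)) (x : M.V (a : P)),
      ((θ b).symm.trans (θ d)) (M.map hle1 x) = M.map hle2 (((θ a).symm.trans (θ b)) x) := by
    intro a b d hab hbd hle1 hle2 x
    rw [hA_step a b (Or.inl hab), hA_step b d (Or.inl hbd), stepEquiv_mem, stepEquiv_mem]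
    have htl : tline Te ⟨((a : P), (b : P)), hab⟩ ⟨((b : P), (d : P)), hbd⟩ :=
      Relation.ReflTransGen.single rfl
    have := LinearMap.congr_fun
      (hnat ⟨((a : P), (b : P)), hab⟩ ⟨((b : P), (d : P)), hbd⟩ htl hle1 hle2) x
    simpa using this
  -- the naturality relation between two edges of `T`
  let Rel : ↥Te → ↥Te → Prop := fun g h => ∀ (a b c d : ↥Tv),
    (a : P) = (g : P × P).1 → (b : P) = (g : P × P).2 →
    (c : P) = (h : P × P).1 → (d : P) = (h : P × P).2 →
    ∀ (hle1 : (a : P) ≤ (b : P)) (hle2 : (c : P) ≤ (d : P)) (x : M.V (a : P)),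
      ((θ b).symm.trans (θ d)) (M.map hle1 x) = M.map hle2 (((θ a).symm.trans (θ c)) x)
  have hRel_refl : ∀ g, Rel g g := by
    intro g a b c d ha hb hc hd hle1 hle2 x
    obtain rfl : a = c := Subtype.ext (ha.trans hc.symm)
    obtain rfl : b = d := Subtype.ext (hb.trans hd.symm)
    simp only [LinearEquiv.trans_apply, LinearEquiv.symm_apply_apply]
    simp
  have hRel_adj : ∀ g h : ↥Te, (g : P × P).2 = (h : P × P).1 → Rel g h := by
    intro g h hgh a b c d ha hb hc hd hle1 hle2 x
    obtain rfl : b = c := Subtype.ext (hb.trans (hgh.trans hc.symm))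
    have hab : ((a : P), (b : P)) ∈ Te := by rw [ha, hb]; exact g.2
    have hbd : ((b : P), (d : P)) ∈ Te := by rw [hb, hd, hgh]; exact h.2
    exact hbase a b d hab hbd hle1 hle2 x
  have hRel_symm : ∀ g h, Rel g h → Rel h g := by
    intro g h hR a b c d ha hb hc hd hle1 hle2 x
    have key := hR c d a b hc hd ha hb hle2 hle1 (((θ a).symm.trans (θ c)) x)
    simp only [LinearEquiv.trans_apply, LinearEquiv.symm_apply_apply,
      LinearEquiv.apply_symm_apply] at key ⊢
    rw [← key]
    simp
  have hRel_trans : ∀ g h g', Rel g h → Rel h g' → Rel g g' := by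
    intro g h g' h1 h2 a b c d ha hb hc hd hle1 hle2 x
    obtain ⟨hcov, hm1, hm2⟩ := hTe _ h.2
    have k1 := h1 a b ⟨(h : P × P).1, hm1⟩ ⟨(h : P × P).2, hm2⟩ ha hb rfl rfl hle1 hcov.le x
    have k2 := h2 ⟨(h : P × P).1, hm1⟩ ⟨(h : P × P).2, hm2⟩ c d rfl rfl hc hd hcov.le hle2
      (((θ a).symm.trans (θ ⟨(h : P × P).1, hm1⟩)) x)
    simp only [LinearEquiv.trans_apply] at k1 k2 ⊢
    have k1' : (θ b).symm (M.map hle1 x) =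
        (θ ⟨(h : P × P).2, hm2⟩).symm (M.map hcov.le
          (θ ⟨(h : P × P).1, hm1⟩ ((θ a).symm x))) := by
      rw [← k1]; simp
    rw [k1']
    rw [k2]
    simp
  have hreach : ∀ g h : ↥Te, Rel g h := by
    intro g h
    obtain ⟨w⟩ := hlc.preconnected g h
    induction w with
    | nil => exact hRel_refl _
    | cons hadj q ih =>
        rcases ((SimpleGraph.fromRel_adj _ _ _).mp hadj).2 with he | he
        · exact hRel_trans _ _ _ (hRel_adj _ _ he) ih
        · exact hRel_trans _ _ _ (hRel_symm _ _ (hRel_adj _ _ he)) ih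
  -- assemble the answer
  refine ⟨fun u v => (θ u).symm.trans (θ v), fun u => LinearEquiv.symm_trans_self _, ?_, ?_⟩
  · intro u v w
    ext x
    simp [LinearEquiv.trans_apply]
  · intro u w s t hc1 hc2 h1 h2
    have he : ((u : P), (w : P)) ∈ Te := hcov_edge u w hc1
    have hf : ((s : P), (t : P)) ∈ Te := hcov_edge s t hc2
    have := hreach ⟨_, he⟩ ⟨_, hf⟩ u w s t rfl rfl rfl rfl h1 h2
    ext x
    simpa using this x
end

section
/- Let P be a finite poset, let T ⊆ H_P be a line connected subgraph that is a tree, let P_T be the sub-poset generated by T, and let M be a kP-module whose gradient vanishes on T (i.e. there is a natural isomorphism β*(M_T) ≅ φ*(M_T)). Then M_T is locally constant (that is, M(u ≤ v) is an isomorphism for every relation u ≤ v in P_T) if and only if M(u ≤ v) is an isomorphism for at least one covering relation u ⋖ v in P_T. -/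
theorem statement1 (k : Type) [Field k] (P : Type) [Fintype P] [PartialOrder P]
    (Tv : Set P) (Te : Set (P × P))
    -- `T` is a subgraph of the Hasse diagram `H_P`, with vertex set `Tv` and edge set `Te`
    (hTe : ∀ e ∈ Te, (e.1 ⋖ e.2) ∧ e.1 ∈ Tv ∧ e.2 ∈ Tv)
    -- `T` is a tree: its underlying undirected graph is connected and acyclic
    (htree : (SimpleGraph.fromRel (fun a b : ↥Tv => ((a : P), (b : P)) ∈ Te)).IsTree)
    -- `T` is line connected: the line digraph of `T` is connected as an undirected graph
    (hlc : (SimpleGraph.fromRel (fun e f : ↥Te => (e : P × P).2 = (f : P × P).1)).Connected)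
    (M : PModule k P)
    -- the gradient of `M` vanishes on `T`: a natural isomorphism `β*(M_T) ≅ φ*(M_T)`
    (hgrad : ∃ α : ∀ e : ↥Te, (M.V (e : P × P).1 ≃ₗ[k] M.V (e : P × P).2),
      ∀ (e f : ↥Te), tline Te e f →
        ∀ (h1 : (e : P × P).1 ≤ (f : P × P).1) (h2 : (e : P × P).2 ≤ (f : P × P).2),
          (α f).toLinearMap.comp (M.map h1) = (M.map h2).comp (α e).toLinearMap) :
    -- `M_T` is locally constant iff `M` is an isomorphism on some covering relation of `P_T`
    (∀ u v : ↥Tv, ptle Tv Te u v → ∀ h : (u : P) ≤ (v : P), Function.Bijective (M.map h)) ↔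
      (∃ u v : ↥Tv, ptcov Tv Te u v ∧ ∃ h : (u : P) ≤ (v : P), Function.Bijective (M.map h)) := by
  obtain ⟨α, hα⟩ := hgrad
  have ple : ∀ {u v : ↥Tv}, ptle Tv Te u v → (u : P) ≤ (v : P) := by
    intro u v h
    induction h with
    | refl => exact le_refl _
    | tail _ hbc ih => exact ih.trans (hTe _ hbc).1.le
  have bcongr : ∀ {x y y' : P} (_ : y = y') (h : x ≤ y) (h' : x ≤ y'),
      Function.Bijective (M.map h) ↔ Function.Bijective (M.map h') := by
    intro x y y' hy h h'; subst hy; rfl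
  have fcongr : ∀ {x x' y : P} (_ : x = x') (h : x ≤ y) (h' : x' ≤ y),
      Function.Bijective (M.map h) ↔ Function.Bijective (M.map h') := by
    intro x x' y hx h h'; subst hx; rfl
  have step : ∀ e f : ↥Te, (e : P × P).2 = (f : P × P).1 →
      (Function.Bijective (M.map (hTe e.val e.property).1.le) ↔
       Function.Bijective (M.map (hTe f.val f.property).1.le)) := by
    intro e f heq
    have he := (hTe e.val e.property).1
    have hf := (hTe f.val f.property).1
    have h1 : (e : P × P).1 ≤ (f : P × P).1 := he.le.trans_eq heq
    have h2 : (e : P × P).2 ≤ (f : P × P).2 := heq.trans_le hf.le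
    have hnat := hα e f (Relation.ReflTransGen.single heq) h1 h2
    have hfun : ⇑(α f) ∘ ⇑(M.map h1) = ⇑(M.map h2) ∘ ⇑(α e) := by
      have := congrArg (fun g : M.V (e : P × P).1 →ₗ[k] M.V (f : P × P).2 => ⇑g) hnat
      simpa [LinearMap.coe_comp] using this
    calc Function.Bijective ⇑(M.map he.le)
        ↔ Function.Bijective ⇑(M.map h1) := bcongr heq he.le h1
      _ ↔ Function.Bijective (⇑(α f) ∘ ⇑(M.map h1)) :=
          (Function.Bijective.of_comp_iff' (α f).bijective _).symm
      _ ↔ Function.Bijective (⇑(M.map h2) ∘ ⇑(α e)) := by rw [hfun]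
      _ ↔ Function.Bijective ⇑(M.map h2) :=
          Function.Bijective.of_comp_iff _ (α e).bijective
      _ ↔ Function.Bijective ⇑(M.map hf.le) := fcongr heq h2 hf.le
  have reach : ∀ {e f : ↥Te},
      (SimpleGraph.fromRel (fun e f : ↥Te => (e : P × P).2 = (f : P × P).1)).Walk e f →
      (Function.Bijective (M.map (hTe e.val e.property).1.le) ↔
       Function.Bijective (M.map (hTe f.val f.property).1.le)) := by
    intro e f w
    induction w with
    | nil => rfl
    | cons hadj _ ih =>
      rw [SimpleGraph.fromRel_adj] at hadj
      rcases hadj.2 with h | h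
      · exact (step _ _ h).trans ih
      · exact ((step _ _ h).symm).trans ih
  have allQ : ∀ e f : ↥Te, Function.Bijective (M.map (hTe e.val e.property).1.le) →
      Function.Bijective (M.map (hTe f.val f.property).1.le) := by
    intro e f hQ
    exact ((hlc.preconnected e f).elim fun w => reach w).mp hQ
  constructor
  · intro hloc
    obtain ⟨e⟩ := hlc.nonempty
    obtain ⟨cov, hu, hv⟩ := hTe e.val e.property
    have hmem : ((e : P × P).1, (e : P × P).2) ∈ Te := e.property
    refine ⟨⟨(e : P × P).1, hu⟩, ⟨(e : P × P).2, hv⟩, ⟨⟨Relation.ReflTransGen.single hmem, ?_⟩, ?_⟩,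
      cov.le, hloc _ _ (Relation.ReflTransGen.single hmem) cov.le⟩
    · intro hvu
      exact cov.lt.not_ge (ple hvu)
    · rintro c ⟨huc, hcu⟩ ⟨hcv, hvc⟩
      have h1 : (e : P × P).1 < (c : P) := by
        refine (ple huc).lt_of_ne fun hEq => hcu ?_
        have : c = (⟨(e : P × P).1, hu⟩ : ↥Tv) := Subtype.ext hEq.symm
        rw [this]
        exact Relation.ReflTransGen.refl
      have h2 : (c : P) < (e : P × P).2 := by
        refine (ple hcv).lt_of_ne fun hEq => hvc ?_
        have : (⟨(e : P × P).2, hv⟩ : ↥Tv) = c := Subtype.ext hEq.symm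
        rw [this]
        exact Relation.ReflTransGen.refl
      exact cov.2 h1 h2
  · rintro ⟨u, v, ⟨⟨hle, hnle⟩, hmid⟩, h, hbij⟩
    have hedge : ((u : P), (v : P)) ∈ Te := by
      rcases Relation.ReflTransGen.cases_head hle with heq | ⟨c, hc, hcv⟩
      · subst heq; exact absurd Relation.ReflTransGen.refl hnle
      · by_cases hcveq : c = v
        · exact hcveq ▸ hc
        · exfalso
          refine hmid c ⟨Relation.ReflTransGen.single hc, fun hcu => ?_⟩
            ⟨hcv, fun hvc => hcveq (Subtype.ext (le_antisymm (ple hcv) (ple hvc)))⟩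
          exact (hTe _ hc).1.lt.not_ge (ple hcu)
    have hQ0 : Function.Bijective
        (M.map (hTe ((⟨((u : P), (v : P)), hedge⟩ : ↥Te) : P × P)
          (⟨((u : P), (v : P)), hedge⟩ : ↥Te).property).1.le) := hbij
    intro a b hab
    induction hab with
    | refl =>
      intro h'
      rw [show M.map h' = LinearMap.id from M.map_id _]
      exact Function.bijective_id
    | @tail b c hab2 hbc ih =>
      intro h'
      have hb : (a : P) ≤ (b : P) := ple hab2
      have hc : (b : P) ≤ (c : P) := (hTe _ hbc).1.le
      rw [show M.map h' = (M.map hc).comp (M.map hb) from M.map_comp hb hc,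
        LinearMap.coe_comp]
      have hQedge : Function.Bijective (M.map (hTe ((⟨((b : P), (c : P)), hbc⟩ : ↥Te) : P × P)
          (⟨((b : P), (c : P)), hbc⟩ : ↥Te).property).1.le) := allQ _ _ hQ0
      exact Function.Bijective.comp hQedge (ih hb)
end

section
/- Let P be a finite poset, let T ⊆ H_P be a line connected subgraph that is a tree, let P_T be the sub-poset generated by T, and let M be a kP-module. Suppose there exists a family of k-linear isomorphisms α_{u,v} : M(u) → M(v) for all u, v ∈ P_T such that α_{u,u} = id_{M(u)}, α_{v,w} ∘ α_{u,v} = α_{u,w} for all u, v, w, and α_{w,t} ∘ M(u ≤ w) = M(s ≤ t) ∘ α_{u,s} for every pair of covering relations u ⋖ w and s ⋖ t in P_T. Then the gradient of M vanishes on T, i.e. there is a natural isomorphism β*(M_T) ≅ φ*(M_T) of functors on the line poset of P_T. -/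
theorem statement2 (k : Type) [Field k] (P : Type) [Fintype P] [PartialOrder P]
    (Tv : Set P) (Te : Set (P × P))
    -- `T` is a subgraph of the Hasse diagram `H_P`, with vertex set `Tv` and edge set `Te`
    (hTe : ∀ e ∈ Te, (e.1 ⋖ e.2) ∧ e.1 ∈ Tv ∧ e.2 ∈ Tv)
    -- `T` is a tree: its underlying undirected graph is connected and acyclic
    (htree : (SimpleGraph.fromRel (fun a b : ↥Tv => ((a : P), (b : P)) ∈ Te)).IsTree)
    -- `T` is line connected: the line digraph of `T` is connected as an undirected graph
    (hlc : (SimpleGraph.fromRel (fun e f : ↥Te => (e : P × P).2 = (f : P × P).1)).Connected)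
    (M : PModule k P)
    -- a coherent family of isomorphisms, compatible with `M` on covering relations of `P_T`
    (α : ∀ u v : ↥Tv, (M.V (u : P) ≃ₗ[k] M.V (v : P)))
    (hrefl : ∀ u : ↥Tv, α u u = LinearEquiv.refl k (M.V (u : P)))
    (htrans : ∀ u v w : ↥Tv, (α u v).trans (α v w) = α u w)
    (hcomm : ∀ u w s t : ↥Tv, ptcov Tv Te u w → ptcov Tv Te s t →
      ∀ (h1 : (u : P) ≤ (w : P)) (h2 : (s : P) ≤ (t : P)),
        (α w t).toLinearMap.comp (M.map h1) = (M.map h2).comp ((α u s).toLinearMap)) :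
    -- conclusion: the gradient of `M` vanishes on `T`,
    -- i.e. there is a natural isomorphism `β*(M_T) ≅ φ*(M_T)`
    ∃ η : ∀ e : ↥Te, (M.V (e : P × P).1 ≃ₗ[k] M.V (e : P × P).2),
      ∀ (e f : ↥Te), tline Te e f →
        ∀ (h1 : (e : P × P).1 ≤ (f : P × P).1) (h2 : (e : P × P).2 ≤ (f : P × P).2),
          (η f).toLinearMap.comp (M.map h1) = (M.map h2).comp (η e).toLinearMap := by
  classical
  -- `ptle` implies `≤` in `P`
  have hle_of_ptle : ∀ a b : ↥Tv, ptle Tv Te a b → (a : P) ≤ (b : P) := by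
    intro a b h
    induction h with
    | refl => exact le_refl _
    | tail _ hstep ih => exact ih.trans (hTe _ hstep).1.le
  -- `ptlt` implies `<` in `P`
  have hlt_of_ptlt : ∀ a b : ↥Tv, ptlt Tv Te a b → (a : P) < (b : P) := by
    intro a b h
    refine lt_of_le_of_ne (hle_of_ptle a b h.1) ?_
    intro hval
    have hab : a = b := Subtype.ext hval
    rw [hab] at h
    exact h.2 Relation.ReflTransGen.refl
  -- every edge of `T` is a covering relation of `P_T`
  have hcov_edge : ∀ (e : P × P) (he : e ∈ Te),
      ptcov Tv Te ⟨e.1, (hTe e he).2.1⟩ ⟨e.2, (hTe e he).2.2⟩ := by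
    intro e he
    have hc := (hTe e he).1
    have hstep : ptle Tv Te ⟨e.1, (hTe e he).2.1⟩ ⟨e.2, (hTe e he).2.2⟩ := by
      apply Relation.ReflTransGen.single
      simpa using he
    refine ⟨⟨hstep, ?_⟩, ?_⟩
    · intro hback
      exact absurd (hle_of_ptle _ _ hback) (not_le_of_gt hc.1)
    · intro c h1 h2
      exact hc.2 (hlt_of_ptlt _ _ h1) (hlt_of_ptlt _ _ h2)
  -- `tline` gives inequalities on endpoints
  have hle_tline : ∀ e f : ↥Te, tline Te e f →
      (e : P × P).1 ≤ (f : P × P).1 ∧ (e : P × P).2 ≤ (f : P × P).2 := by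
    intro e f h
    induction h with
    | refl => exact ⟨le_refl _, le_refl _⟩
    | @tail b f hb hbf ih =>
      have hcb := (hTe (b : P × P) b.2).1
      have hcf := (hTe (f : P × P) f.2).1
      exact ⟨ih.1.trans (hcb.le.trans_eq hbf), (ih.2.trans_eq hbf).trans hcf.le⟩
  refine ⟨fun e => α ⟨(e : P × P).1, (hTe (e : P × P) e.2).2.1⟩
      ⟨(e : P × P).2, (hTe (e : P × P) e.2).2.2⟩, ?_⟩
  intro e f hef
  induction hef with
  | refl =>
    intro h1 h2
    rw [show M.map h1 = LinearMap.id from M.map_id _,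
        show M.map h2 = LinearMap.id from M.map_id _,
        LinearMap.comp_id, LinearMap.id_comp]
  | @tail b f hb hbf ih =>
    obtain ⟨⟨f1, f2⟩, hfmem⟩ := f
    simp only at hbf ⊢
    subst hbf
    intro h1 h2
    have he1b1 : (e : P × P).1 ≤ (b : P × P).1 := (hle_tline e b hb).1
    have he2b2 : (e : P × P).2 ≤ (b : P × P).2 := (hle_tline e b hb).2
    have hb1b2 : (b : P × P).1 ≤ (b : P × P).2 := (hTe (b : P × P) b.2).1.le
    have hb2f2 : (b : P × P).2 ≤ f2 := (hTe _ hfmem).1.le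
    have covB := hcov_edge (b : P × P) b.2
    have covF := hcov_edge ((b : P × P).2, f2) hfmem
    have key := hcomm _ _ _ _ covB covF hb1b2 hb2f2
    have ihh := ih he1b1 he2b2
    rw [show M.map h1 = (M.map hb1b2).comp (M.map he1b1) from M.map_comp he1b1 hb1b2,
        show M.map h2 = (M.map hb2f2).comp (M.map he2b2) from M.map_comp he2b2 hb2f2,
        ← LinearMap.comp_assoc, key, LinearMap.comp_assoc, ihh, ← LinearMap.comp_assoc]
end

section
/- Let P be a finite poset and let M, N be kP-modules such that there is a natural isomorphism φ*M ⊕ β*N ≅ φ*N ⊕ β*M of functors on the line poset P̂ (direct sums taken objectwise); that is, the virtual module [M] − [N] has vanishing gradient. Then for every pair of elements (u₀,u₁) ≤ (v₀,v₁) of P̂ one has rank M(u₀ ≤ v₀) − rank N(u₀ ≤ v₀) = rank M(u₁ ≤ v₁) − rank N(u₁ ≤ v₁), where rank denotes the rank of the corresponding k-linear map. -/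
/-- An element of the line poset `P̂` of a poset `P`: a covering relation `src ⋖ tgt`. -/
structure Cov (P : Type) [PartialOrder P] : Type where
  src : P
  tgt : P
  cov : src ⋖ tgt

/-- The order relation of the line poset `P̂`: `e ≤ f` iff `e = f` or there is a chain of
consecutive covering relations from `e` to `f`. -/
def hatle {P : Type} [PartialOrder P] (e f : Cov P) : Prop :=
  Relation.ReflTransGen (fun a b : Cov P => a.tgt = b.src) e f

/-- The product of submodules is linearly equivalent to the product of the two submodules. -/
def submoduleProdEquiv {R A B : Type} [Ring R] [AddCommGroup A] [AddCommGroup B]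
    [Module R A] [Module R B] (p : Submodule R A) (q : Submodule R B) :
    (p.prod q) ≃ₗ[R] p × q where
  toFun x := (⟨x.1.1, x.2.1⟩, ⟨x.1.2, x.2.2⟩)
  invFun y := ⟨(y.1.1, y.2.1), ⟨y.1.2, y.2.2⟩⟩
  map_add' _ _ := rfl
  map_smul' _ _ := rfl
  left_inv _ := rfl
  right_inv _ := rfl

lemma finrank_range_prodMap {k A B C D : Type} [Field k]
    [AddCommGroup A] [Module k A] [FiniteDimensional k A]
    [AddCommGroup B] [Module k B] [FiniteDimensional k B]
    [AddCommGroup C] [Module k C] [FiniteDimensional k C]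
    [AddCommGroup D] [Module k D] [FiniteDimensional k D]
    (f : A →ₗ[k] B) (g : C →ₗ[k] D) :
    Module.finrank k (LinearMap.range (f.prodMap g)) =
      Module.finrank k (LinearMap.range f) + Module.finrank k (LinearMap.range g) := by
  have hr : LinearMap.range (f.prodMap g)
      = (LinearMap.range f).prod (LinearMap.range g) := by
    ext ⟨x, y⟩
    simp only [LinearMap.mem_range, Submodule.mem_prod, Prod.ext_iff, LinearMap.prodMap_apply,
      Prod.exists]
    constructor
    · rintro ⟨a, c, ha, hc⟩; exact ⟨⟨a, ha⟩, ⟨c, hc⟩⟩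
    · rintro ⟨⟨a, ha⟩, ⟨c, hc⟩⟩; exact ⟨a, c, ha, hc⟩
  rw [hr,
    LinearEquiv.finrank_eq (submoduleProdEquiv (LinearMap.range f) (LinearMap.range g)),
    Module.finrank_prod]

theorem statement3 (k : Type) [Field k] (P : Type) [Fintype P] [PartialOrder P]
    (M N : PModule k P)
    -- the gradient of `[M] − [N]` vanishes:
    -- a natural isomorphism `φ*M ⊕ β*N ≅ φ*N ⊕ β*M` on the line poset `P̂`
    (hgrad : ∃ η : ∀ e : Cov P, ((M.V e.tgt × N.V e.src) ≃ₗ[k] (N.V e.tgt × M.V e.src)),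
      ∀ (e f : Cov P), hatle e f →
        ∀ (h0 : e.src ≤ f.src) (h1 : e.tgt ≤ f.tgt),
          (η f).toLinearMap.comp (LinearMap.prodMap (M.map h1) (N.map h0)) =
            (LinearMap.prodMap (N.map h1) (M.map h0)).comp ((η e).toLinearMap)) :
    -- conclusion: equality of rank differences along any relation of `P̂`
    ∀ (e f : Cov P), hatle e f →
      ∀ (h0 : e.src ≤ f.src) (h1 : e.tgt ≤ f.tgt),
        (Module.finrank k (LinearMap.range (M.map h0)) : ℤ)
            - (Module.finrank k (LinearMap.range (N.map h0)) : ℤ)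
          = (Module.finrank k (LinearMap.range (M.map h1)) : ℤ)
            - (Module.finrank k (LinearMap.range (N.map h1)) : ℤ) := by
  obtain ⟨η, hnat⟩ := hgrad
  intro e f hef h0 h1
  have hcomm := hnat e f hef h0 h1
  -- rank of LHS composition = rank of prodMap (M h1) (N h0)
  have hL : Module.finrank k (LinearMap.range
        ((η f).toLinearMap.comp (LinearMap.prodMap (M.map h1) (N.map h0))))
      = Module.finrank k (LinearMap.range (LinearMap.prodMap (M.map h1) (N.map h0))) := by
    rw [LinearMap.range_comp]
    exact LinearEquiv.finrank_map_eq (η f) _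
  have hR : LinearMap.range ((LinearMap.prodMap (N.map h1) (M.map h0)).comp (η e).toLinearMap)
      = LinearMap.range (LinearMap.prodMap (N.map h1) (M.map h0)) := by
    rw [LinearMap.range_comp, LinearEquiv.range, Submodule.map_top]
  have key : Module.finrank k (LinearMap.range (M.map h1))
        + Module.finrank k (LinearMap.range (N.map h0))
      = Module.finrank k (LinearMap.range (N.map h1))
        + Module.finrank k (LinearMap.range (M.map h0)) := by
    have := hL
    rw [hcomm, hR] at this
    rw [finrank_range_prodMap, finrank_range_prodMap] at this
    omega
  omega
end

section
/- Let P be a finite poset whose Hasse diagram H_P is a rooted tree: the underlying undirected graph of H_P is connected and contains no cycles, and P has a unique minimal element. Let U, V be kP̂-modules such that there is a natural isomorphism L_φ(U) ⊕ L_β(V) ≅ L_φ(V) ⊕ L_β(U) of kP-modules (i.e. the left divergence of the virtual module [U] − [V] vanishes). Then dim_k U(x,y) = dim_k V(x,y) for every covering relation (x,y) ∈ P̂. -/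
/-!
STATEMENT 8: For a finite poset P whose Hasse diagram is a rooted tree, if the left
divergence of the virtual kP̂-module [U] − [V] vanishes, i.e.
L_φ(U) ⊕ L_β(V) ≅ L_φ(V) ⊕ L_β(U), then dim U(x,y) = dim V(x,y) for every (x,y) ∈ P̂.
-/

open CategoryTheory

/-- The order on the line poset `P̂`: `e ≤ f` iff `e = f` or there is a chain of
consecutive covering relations from `e` to `f`. -/
instance (P : Type) [PartialOrder P] : Preorder (Cov P) where
  le e f := Relation.ReflTransGen (fun a b : Cov P => a.tgt = b.src) e f
  le_refl _ := Relation.ReflTransGen.refl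
  le_trans _ _ _ h h' := Relation.ReflTransGen.trans h h'

theorem Cov.src_mono {P : Type} [PartialOrder P] : Monotone (fun e : Cov P => e.src) := by
  intro a b h
  have h' : Relation.ReflTransGen (fun a b : Cov P => a.tgt = b.src) a b := h
  clear h
  induction h' with
  | refl => exact le_rfl
  | @tail b c _ hbc ih => exact le_trans ih (le_trans b.cov.le (le_of_eq hbc))

theorem Cov.tgt_mono {P : Type} [PartialOrder P] : Monotone (fun e : Cov P => e.tgt) := by
  intro a b h
  have h' : Relation.ReflTransGen (fun a b : Cov P => a.tgt = b.src) a b := h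
  clear h
  induction h' with
  | refl => exact le_rfl
  | @tail b c _ hbc ih => exact le_trans ih (le_trans (le_of_eq hbc) c.cov.le)

/-- The back map `β : P̂ → P`, `(u,v) ↦ u`, as a functor. -/
def covBack (P : Type) [PartialOrder P] : Cov P ⥤ P := Monotone.functor Cov.src_mono

/-- The front map `φ : P̂ → P`, `(u,v) ↦ v`, as a functor. -/
def covFront (P : Type) [PartialOrder P] : Cov P ⥤ P := Monotone.functor Cov.tgt_mono

/-- Objectwise direct sum of two functors into `FGModuleCat k`. -/
noncomputable def dsum {k : Type} [Field k] {C : Type} [Category C]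
    (F G : C ⥤ FGModuleCat k) : C ⥤ FGModuleCat k where
  obj x := FGModuleCat.of k (F.obj x × G.obj x)
  map f := FGModuleCat.ofHom (LinearMap.prodMap (F.map f).hom.hom (G.map f).hom.hom)
  map_id x := by
    apply FGModuleCat.hom_ext
    rw [CategoryTheory.Functor.map_id, CategoryTheory.Functor.map_id]
    rfl
  map_comp f g := by
    apply FGModuleCat.hom_ext
    rw [CategoryTheory.Functor.map_comp, CategoryTheory.Functor.map_comp]
    rfl

namespace St8
variable {P : Type} [Fintype P] [PartialOrder P]

lemma fin_exists_minimal {α : Type} [Preorder α] (s : Finset α) (h : s.Nonempty) :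
    ∃ m ∈ s, ∀ x ∈ s, ¬ x < m := by
  obtain ⟨m, hm⟩ := s.exists_minimal h
  exact ⟨m, hm.prop, fun x hx hlt => hlt.not_ge (hm.2 hx hlt.le)⟩

lemma fin_exists_maximal {α : Type} [Preorder α] (s : Finset α) (h : s.Nonempty) :
    ∃ m ∈ s, ∀ x ∈ s, ¬ m < x := by
  obtain ⟨m, hm⟩ := s.exists_maximal h
  exact ⟨m, hm.prop, fun x hx hlt => hlt.not_ge (hm.2 hx hlt.le)⟩

lemma exists_isMin_le (y : P) : ∃ m, m ≤ y ∧ IsMin m := by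
  classical
  obtain ⟨m, hm, hmin⟩ := fin_exists_minimal
    (Finset.univ.filter (fun x => x ≤ y)) ⟨y, by simp⟩
  simp only [Finset.mem_filter, Finset.mem_univ, true_and] at hm hmin
  refine ⟨m, hm, fun b hb => ?_⟩
  rcases eq_or_lt_of_le hb with h | h
  · exact le_of_eq h.symm
  · exact absurd h (hmin b (le_trans hb hm))

lemma exists_cov_tgt {r : P} (hu : ∀ m : P, IsMin m → m = r) {y : P} (hy : y ≠ r) :
    ∃ e : Cov P, e.tgt = y := by
  classical
  have hnm : ¬ IsMin y := fun h => hy (hu y h)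
  obtain ⟨x, hx⟩ := not_isMin_iff.1 hnm
  obtain ⟨m, hm, hmax⟩ := fin_exists_maximal
    (Finset.univ.filter (fun z => z < y)) ⟨x, by simpa using hx⟩
  simp only [Finset.mem_filter, Finset.mem_univ, true_and] at hm hmax
  exact ⟨⟨m, y, hm, fun c hc1 hc2 => hmax c hc2 hc1⟩, rfl⟩

lemma cov_tgt_ne {r : P} (hr : IsMin r) (e : Cov P) : e.tgt ≠ r := by
  intro h
  exact absurd (hr (h ▸ e.cov.lt.le)) (not_le_of_gt (h ▸ e.cov.lt))

lemma le_root_eq {r : P} (hr : IsMin r) {x : P} (hx : x ≤ r) : x = r :=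
  le_antisymm hx (hr hx)

lemma root_le {r : P} (hu : ∀ m : P, IsMin m → m = r) (y : P) : r ≤ y := by
  obtain ⟨m, hm, hmin⟩ := exists_isMin_le y
  exact (hu m hmin) ▸ hm

section Tree
set_option linter.unusedSectionVars false
variable (htree : (SimpleGraph.fromRel (fun a b : P => a ⋖ b)).IsTree)
  {r : P} (hr : IsMin r) (hu : ∀ m : P, IsMin m → m = r)

include htree hr hu in
lemma exists_path_down (y : P) :
    ∃ w : (SimpleGraph.fromRel (fun a b : P => a ⋖ b)).Walk y r,
      w.IsPath ∧ ∀ z ∈ w.support, z ≤ y := by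
  induction y using WellFoundedLT.induction with
  | ind y ih =>
    by_cases hy : y = r
    · subst hy
      exact ⟨SimpleGraph.Walk.nil, SimpleGraph.Walk.IsPath.nil, by simp⟩
    · obtain ⟨e, he⟩ := exists_cov_tgt hu hy
      have hlt : e.src < y := he ▸ e.cov.lt
      obtain ⟨w, hw, hsupp⟩ := ih e.src hlt
      have hadj : (SimpleGraph.fromRel (fun a b : P => a ⋖ b)).Adj y e.src := by
        rw [SimpleGraph.fromRel_adj]
        exact ⟨hlt.ne', Or.inr (he ▸ e.cov)⟩
      refine ⟨SimpleGraph.Walk.cons hadj w, ?_, ?_⟩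
      · exact hw.cons (fun hmem => absurd (hsupp y hmem) (not_le_of_gt hlt))
      · intro z hz
        rw [SimpleGraph.Walk.support_cons] at hz
        rcases List.mem_cons.1 hz with hz | hz
        · exact le_of_eq hz
        · exact le_trans (hsupp z hz) hlt.le

include htree hr hu in
lemma cov_eq_of_tgt_eq {e f : Cov P} (h : e.tgt = f.tgt) : e = f := by
  classical
  have hs : e.src = f.src := by
    obtain ⟨w1, hw1, hs1⟩ := exists_path_down htree hr hu e.src
    obtain ⟨w2, hw2, hs2⟩ := exists_path_down htree hr hu f.src
    have hadj1 : (SimpleGraph.fromRel (fun a b : P => a ⋖ b)).Adj e.tgt e.src := by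
      rw [SimpleGraph.fromRel_adj]; exact ⟨e.cov.lt.ne', Or.inr e.cov⟩
    have hadj2 : (SimpleGraph.fromRel (fun a b : P => a ⋖ b)).Adj e.tgt f.src := by
      rw [SimpleGraph.fromRel_adj, h]; exact ⟨f.cov.lt.ne', Or.inr f.cov⟩
    have hp1 : (SimpleGraph.Walk.cons hadj1 w1).IsPath :=
      hw1.cons (fun hmem => absurd (hs1 _ hmem) (not_le_of_gt e.cov.lt))
    have hp2 : (SimpleGraph.Walk.cons hadj2 w2).IsPath :=
      hw2.cons (fun hmem => absurd (hs2 _ hmem) (not_le_of_gt (h ▸ f.cov.lt)))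
    have hEq := (htree.existsUnique_path e.tgt r).unique hp1 hp2
    have hsup := congrArg SimpleGraph.Walk.support hEq
    rw [SimpleGraph.Walk.support_cons, SimpleGraph.Walk.support_cons,
      w1.support_eq_cons, w2.support_eq_cons] at hsup
    simp only [List.cons.injEq] at hsup
    exact hsup.2.1
  cases e with
  | mk s t c =>
    cases f with
    | mk s' t' c' =>
      dsimp at h hs
      subst h; subst hs; rfl


open Classical in
noncomputable def pa (hu : ∀ m : P, IsMin m → m = r) : P → P := fun y =>
  if h : y = r then r else (exists_cov_tgt hu h).choose.src

lemma pa_root (hu : ∀ m : P, IsMin m → m = r) : pa hu r = r := by simp [pa]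

lemma pa_of_ne (hu : ∀ m : P, IsMin m → m = r) {y : P} (h : y ≠ r) :
    pa hu y = (exists_cov_tgt hu h).choose.src := by simp [pa, h]

include htree hr in
lemma pa_tgt (e : Cov P) : pa hu e.tgt = e.src := by
  rw [pa_of_ne hu (cov_tgt_ne hr e)]
  rw [cov_eq_of_tgt_eq htree hr hu ((exists_cov_tgt hu (cov_tgt_ne hr e)).choose_spec.trans rfl : _ = e.tgt)]

include htree hr in
lemma pa_le (y : P) : pa hu y ≤ y := by
  by_cases h : y = r
  · subst h; rw [pa_root]
  · obtain ⟨e, he⟩ := exists_cov_tgt hu h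
    have h1 : pa hu y = e.src := he ▸ pa_tgt htree hr hu e
    rw [h1, ← he]
    exact e.cov.lt.le

include htree hr in
lemma pa_lt {y : P} (h : y ≠ r) : pa hu y < y := by
  obtain ⟨e, he⟩ := exists_cov_tgt hu h
  have h1 : pa hu y = e.src := he ▸ pa_tgt htree hr hu e
  rw [h1, ← he]
  exact e.cov.lt

include htree hr in
lemma le_pa_of_lt {x y : P} (h : x < y) : x ≤ pa hu y := by
  classical
  obtain ⟨m, hm, hmax⟩ := fin_exists_maximal
    (Finset.univ.filter (fun z => x ≤ z ∧ z < y)) ⟨x, by simpa using h⟩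
  simp only [Finset.mem_filter, Finset.mem_univ, true_and] at hm hmax
  have hcov : m ⋖ y := ⟨hm.2, fun c hc1 hc2 => hmax c ⟨le_trans hm.1 hc1.le, hc2⟩ hc1⟩
  have : pa hu (Cov.mk m y hcov).tgt = m := pa_tgt htree hr hu _
  exact this ▸ hm.1

include htree hr in
lemma pa_mono : Monotone (pa hu) := by
  intro y z hyz
  rcases eq_or_lt_of_le hyz with h | h
  · subst h; exact le_rfl
  · exact le_trans (pa_le htree hr hu y) (le_pa_of_lt htree hr hu h)

include htree hr in
lemma pa_iter_eq_root (y : P) : ∃ n : ℕ, (pa hu)^[n] y = r := by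
  induction y using WellFoundedLT.induction with
  | ind y ih =>
    by_cases hy : y = r
    · exact ⟨0, hy⟩
    · have hlt : pa hu y < y := pa_lt htree hr hu hy
      obtain ⟨n, hn⟩ := ih _ hlt
      exact ⟨n + 1, by rw [Function.iterate_succ_apply]; exact hn⟩

include htree hr in
lemma pa_iter_uniform : ∃ N : ℕ, ∀ y : P, (pa hu)^[N] y = r := by
  classical
  have stable : ∀ d : ℕ, (pa hu)^[d] r = r := by
    intro d
    induction d with
    | zero => rfl
    | succ d ihd => rw [Function.iterate_succ_apply, pa_root, ihd]
  have key : ∀ y : P, ∀ m n : ℕ, (pa hu)^[m] y = r → m ≤ n → (pa hu)^[n] y = r := by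
    intro y m n hm hmn
    obtain ⟨d, rfl⟩ := Nat.exists_eq_add_of_le hmn
    rw [Nat.add_comm, Function.iterate_add_apply, hm, stable]
  choose f hf using pa_iter_eq_root htree hr hu (P := P)
  refine ⟨Finset.univ.sup f, fun y => key y (f y) _ (hf y) (Finset.le_sup (Finset.mem_univ y))⟩

include htree hr hu in
lemma cov_le_of_tgt_le {f e : Cov P} (h : f.tgt ≤ e.tgt) : f ≤ e := by
  -- strong induction on e.tgt
  have main : ∀ t : P, ∀ e : Cov P, e.tgt = t → ∀ f : Cov P, f.tgt ≤ t → f ≤ e := by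
    intro t
    induction t using WellFoundedLT.induction with
    | ind t ih =>
      intro e het f hft
      rcases eq_or_lt_of_le hft with heq | hlt
      · have : f = e := cov_eq_of_tgt_eq htree hr hu (heq.trans het.symm)
        exact this ▸ le_refl f
      · have h1 : f.tgt ≤ pa hu t := le_pa_of_lt htree hr hu hlt
        have h2 : pa hu t = e.src := het ▸ pa_tgt htree hr hu e
        have hsrc : f.tgt ≤ e.src := h2 ▸ h1
        have hne : e.src ≠ r := by
          intro hsr
          exact cov_tgt_ne hr f (le_root_eq hr (hsr ▸ hsrc))
        obtain ⟨e', he'⟩ := exists_cov_tgt hu hne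
        have hlt' : e'.tgt < t := het ▸ (he'.symm ▸ e.cov.lt : e'.tgt < e.tgt)
        have hfe' : f ≤ e' := ih e'.tgt hlt' e' rfl f (he' ▸ hsrc)
        have step : Relation.ReflTransGen (fun a b : Cov P => a.tgt = b.src) e' e :=
          Relation.ReflTransGen.single he'
        exact le_trans hfe' step
  exact main e.tgt e rfl f h

end Tree

/-! ### Finiteness of `Cov P` -/

lemma Cov.ext' {e f : Cov P} (h1 : e.src = f.src) (h2 : e.tgt = f.tgt) : e = f := by
  cases e with
  | mk s t c =>
    cases f with
    | mk s' t' c' =>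
      dsimp at h1 h2
      subst h1; subst h2; rfl

instance : Finite (Cov P) :=
  Finite.of_injective (fun e : Cov P => (e.src, e.tgt))
    (fun e f h => Cov.ext' (congrArg Prod.fst h) (congrArg Prod.snd h))

/-! ### Test modules -/

universe v v₂ v₃

section Modules
variable (k : Type) [Field k] {r : P}

/-- The thin test module supported on `{q | q ≤ p ∧ q ≠ r}`, at position `q`. -/
def Wm (r p q : P) : Submodule k (PLift (q ≤ p) → ULift.{v} k) where
  carrier := {f | q = r → f = 0}
  add_mem' := fun {f} {g} hf hg h => by rw [hf h, hg h, add_zero]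
  zero_mem' := fun _ => rfl
  smul_mem' := fun c {f} hf h => by rw [hf h, smul_zero]

/-- Structure map of the thin test module. -/
def wmap (hr : IsMin r) (p : P) {q q' : P} (h : q ≤ q') :
    Wm k r p q →ₗ[k] Wm k r p q' where
  toFun f := ⟨fun hq' => f.1 ⟨h.trans hq'.down⟩, fun hq'r => by
    have hq : q = r := le_root_eq hr (hq'r ▸ h)
    have hf : f.1 = 0 := f.2 hq
    funext x
    exact congrFun hf _⟩
  map_add' f g := rfl
  map_smul' c f := rfl

lemma wm_subsingleton (p : P) {q : P} (hq : q = r) : Subsingleton (Wm k r p q) :=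
  ⟨fun a b => Subtype.ext (by rw [a.2 hq, b.2 hq])⟩

/-- Changing the universe of the thin test module. -/
def wmEquiv (r p q : P) : Wm.{v} k r p q ≃ₗ[k] Wm.{v₂} k r p q where
  toFun f := ⟨fun h => ULift.up (f.1 h).down, fun hq => by funext h; rw [f.2 hq]; rfl⟩
  invFun f := ⟨fun h => ULift.up (f.1 h).down, fun hq => by funext h; rw [f.2 hq]; rfl⟩
  map_add' f g := rfl
  map_smul' c f := rfl
  left_inv f := rfl
  right_inv f := rfl

/-- The family of test functors on `P`, indexed by a monotone reparametrization `g`. -/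
def Ig (hr : IsMin r) (p : P) (g : P → P) (hg : Monotone g) : P ⥤ FGModuleCat k where
  obj y := FGModuleCat.of k (Wm k r p (g y))
  map {y z} h := FGModuleCat.ofHom (wmap k hr p (hg (leOfHom h)))
  map_id y := rfl
  map_comp f g := rfl

end Modules

/-! ### Spaces of natural linear transformations -/

section NatLin
open CategoryTheory
variable (k : Type) [Field k] {C : Type} [Category.{0} C]

/-- Natural transformations between functors to `FGModuleCat.{v} k`, as a submodule of
the product of the hom spaces. -/
def NatLin2 (F : C ⥤ FGModuleCat.{v} k) (G : C ⥤ FGModuleCat.{v₂} k) :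
    Submodule k (∀ x : C, (F.obj x : Type v) →ₗ[k] (G.obj x : Type v₂)) where
  carrier := {η | ∀ ⦃x y : C⦄ (h : x ⟶ y),
    LinearMap.comp (G.map h).hom.hom (η x) = LinearMap.comp (η y) (F.map h).hom.hom}
  add_mem' := fun {η} {η'} hη hη' x y h => by
    simp only [Pi.add_apply, LinearMap.comp_add, LinearMap.add_comp, hη h, hη' h]
  zero_mem' := fun x y h => by
    simp only [Pi.zero_apply, LinearMap.comp_zero, LinearMap.zero_comp]
  smul_mem' := fun c η hη x y h => by
    simp only [Pi.smul_apply, LinearMap.comp_smul, LinearMap.smul_comp, hη h]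

/-- The same-universe version. -/
abbrev NatLin (F G : C ⥤ FGModuleCat.{v} k) := NatLin2 k F G

variable {k}

lemma natLin_apply {F : C ⥤ FGModuleCat.{v} k} {G : C ⥤ FGModuleCat.{v₂} k} (η : NatLin2 k F G) {x y : C} (h : x ⟶ y)
    (v : F.obj x) : (G.map h).hom.hom (η.1 x v) = η.1 y ((F.map h).hom.hom v) :=
  LinearMap.congr_fun (η.2 h) v

lemma finrank_natLin_post (F : C ⥤ FGModuleCat.{v} k) (G : C ⥤ FGModuleCat.{v₂} k)
    (G' : C ⥤ FGModuleCat.{v₃} k)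
    (e : ∀ x : C, (G.obj x : Type v₂) ≃ₗ[k] (G'.obj x : Type v₃))
    (he : ∀ ⦃x y : C⦄ (h : x ⟶ y) (w : G.obj x),
      (G'.map h).hom.hom (e x w) = e y ((G.map h).hom.hom w)) :
    Module.finrank k (NatLin2 k F G) = Module.finrank k (NatLin2 k F G') := by
  have he' : ∀ ⦃x y : C⦄ (h : x ⟶ y) (w : G'.obj x),
      (G.map h).hom.hom ((e x).symm w) = (e y).symm ((G'.map h).hom.hom w) := by
    intro x y h w
    apply (e y).injective
    rw [LinearEquiv.apply_symm_apply, ← he h, LinearEquiv.apply_symm_apply]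
  refine LinearEquiv.finrank_eq (LinearEquiv.ofLinear
    ({ toFun := fun η => ⟨fun x => (e x).toLinearMap.comp (η.1 x), by
          intro x y h
          apply LinearMap.ext
          intro w
          show (G'.map h).hom.hom (e x (η.1 x w)) = e y (η.1 y ((F.map h).hom.hom w))
          rw [he h, ← natLin_apply η h w]⟩
       map_add' := fun η η' => by
          apply Subtype.ext
          funext x
          apply LinearMap.ext
          intro w
          exact (e x).map_add _ _
       map_smul' := fun c η => by
          apply Subtype.ext
          funext x
          apply LinearMap.ext
          intro w
          exact (e x).map_smul _ _ } : NatLin2 k F G →ₗ[k] NatLin2 k F G')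
    ({ toFun := fun η => ⟨fun x => (e x).symm.toLinearMap.comp (η.1 x), by
          intro x y h
          apply LinearMap.ext
          intro w
          show (G.map h).hom.hom ((e x).symm (η.1 x w)) =
            (e y).symm (η.1 y ((F.map h).hom.hom w))
          rw [he' h, ← natLin_apply η h w]⟩
       map_add' := fun η η' => by
          apply Subtype.ext
          funext x
          apply LinearMap.ext
          intro w
          exact (e x).symm.map_add _ _
       map_smul' := fun c η => by
          apply Subtype.ext
          funext x
          apply LinearMap.ext
          intro w
          exact (e x).symm.map_smul _ _ } : NatLin2 k F G' →ₗ[k] NatLin2 k F G) ?_ ?_)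
  · apply LinearMap.ext
    intro η
    apply Subtype.ext
    funext x
    apply LinearMap.ext
    intro w
    exact (e x).apply_symm_apply _
  · apply LinearMap.ext
    intro η
    apply Subtype.ext
    funext x
    apply LinearMap.ext
    intro w
    exact (e x).symm_apply_apply _

instance natLin_fd [Finite C] (F G : C ⥤ FGModuleCat.{v} k) :
    FiniteDimensional k (NatLin k F G) := by
  infer_instance

lemma finrank_natLin_zero (F G : C ⥤ FGModuleCat.{v} k)
    (hG : ∀ x : C, Subsingleton (G.obj x : Type v)) :
    Module.finrank k (NatLin k F G) = 0 := by
  have : Subsingleton (NatLin k F G) := by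
    constructor
    intro a b
    apply Subtype.ext
    funext x
    apply LinearMap.ext
    intro v
    exact @Subsingleton.elim _ (hG x) _ _
  exact Module.finrank_zero_of_subsingleton

/-- Precomposition with a natural transformation. -/
def natLinPre {X Y : C ⥤ FGModuleCat.{v} k} (T : X ⟶ Y) (I : C ⥤ FGModuleCat.{v₂} k) :
    NatLin2 k Y I →ₗ[k] NatLin2 k X I where
  toFun η := ⟨fun x => (η.1 x).comp (T.app x).hom.hom, by
    intro x y h
    have Tnat : LinearMap.comp (T.app y).hom.hom (X.map h).hom.hom =
        LinearMap.comp (Y.map h).hom.hom (T.app x).hom.hom :=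
      FGModuleCat.hom_ext_iff.mp (T.naturality h)
    calc LinearMap.comp (I.map h).hom.hom ((η.1 x).comp (T.app x).hom.hom)
        = LinearMap.comp (LinearMap.comp (I.map h).hom.hom (η.1 x)) (T.app x).hom.hom :=
          (LinearMap.comp_assoc _ _ _).symm
      _ = LinearMap.comp (LinearMap.comp (η.1 y) (Y.map h).hom.hom) (T.app x).hom.hom := by
          rw [η.2 h]
      _ = LinearMap.comp (η.1 y) (LinearMap.comp (Y.map h).hom.hom (T.app x).hom.hom) :=
          LinearMap.comp_assoc _ _ _
      _ = LinearMap.comp (η.1 y) (LinearMap.comp (T.app y).hom.hom (X.map h).hom.hom) := by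
          rw [Tnat]
      _ = LinearMap.comp (LinearMap.comp (η.1 y) (T.app y).hom.hom) (X.map h).hom.hom :=
          (LinearMap.comp_assoc _ _ _).symm⟩
  map_add' η η' := rfl
  map_smul' c η := rfl

lemma finrank_natLin_iso {X Y : C ⥤ FGModuleCat.{v} k} (θ : X ≅ Y) (I : C ⥤ FGModuleCat.{v₂} k) :
    Module.finrank k (NatLin2 k X I) = Module.finrank k (NatLin2 k Y I) := by
  refine (LinearEquiv.ofLinear (natLinPre θ.hom I) (natLinPre θ.inv I) ?_ ?_).symm.finrank_eq
  · apply LinearMap.ext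
    intro η
    apply Subtype.ext
    funext x
    apply LinearMap.ext
    intro v
    have hv : (θ.inv.app x).hom.hom ((θ.hom.app x).hom.hom v) = v :=
      LinearMap.congr_fun
        (show LinearMap.comp (θ.inv.app x).hom.hom (θ.hom.app x).hom.hom = LinearMap.id from
          FGModuleCat.hom_ext_iff.mp (θ.hom_inv_id_app x)) v
    show η.1 x ((θ.inv.app x).hom.hom ((θ.hom.app x).hom.hom v)) = η.1 x v
    exact congrArg (η.1 x) hv
  · apply LinearMap.ext
    intro η
    apply Subtype.ext
    funext x
    apply LinearMap.ext
    intro v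
    have hv : (θ.hom.app x).hom.hom ((θ.inv.app x).hom.hom v) = v :=
      LinearMap.congr_fun
        (show LinearMap.comp (θ.hom.app x).hom.hom (θ.inv.app x).hom.hom = LinearMap.id from
          FGModuleCat.hom_ext_iff.mp (θ.inv_hom_id_app x)) v
    show η.1 x ((θ.hom.app x).hom.hom ((θ.inv.app x).hom.hom v)) = η.1 x v
    exact congrArg (η.1 x) hv


/-- A `NatLin` element as a categorical natural transformation. -/
def natLinToHom {F G : C ⥤ FGModuleCat.{v} k} (η : NatLin k F G) : F ⟶ G where
  app x := ObjectProperty.homMk (ModuleCat.ofHom (η.1 x))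
  naturality x y h := FGModuleCat.hom_ext (η.2 h).symm

lemma finrank_natLin_kan {D : Type} [Category.{0} D]
    (L : C ⥤ D) (F : C ⥤ FGModuleCat.{v} k) (F' : D ⥤ FGModuleCat.{v} k)
    (α : F ⟶ L ⋙ F') [F'.IsLeftKanExtension α] (G : D ⥤ FGModuleCat.{v} k) :
    Module.finrank k (NatLin k F' G) = Module.finrank k (NatLin k F (L ⋙ G)) := by
  refine LinearEquiv.finrank_eq (LinearEquiv.ofBijective
    ({ toFun := fun η => ⟨fun x => (η.1 (L.obj x)).comp (α.app x).hom.hom, ?_⟩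
       map_add' := fun η η' => rfl
       map_smul' := fun c η => rfl } :
      NatLin k F' G →ₗ[k] NatLin k F (L ⋙ G)) ⟨?_, ?_⟩)
  · -- naturality of the image
    intro x y h
    have Tnat : LinearMap.comp (α.app y).hom.hom (F.map h).hom.hom =
        LinearMap.comp ((L ⋙ F').map h).hom.hom (α.app x).hom.hom :=
      FGModuleCat.hom_ext_iff.mp (α.naturality h)
    calc LinearMap.comp ((L ⋙ G).map h).hom.hom ((η.1 (L.obj x)).comp (α.app x).hom.hom)
        = LinearMap.comp (LinearMap.comp (G.map (L.map h)).hom.hom (η.1 (L.obj x)))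
            (α.app x).hom.hom :=
          (LinearMap.comp_assoc _ _ _).symm
      _ = LinearMap.comp (LinearMap.comp (η.1 (L.obj y)) (F'.map (L.map h)).hom.hom)
            (α.app x).hom.hom := by
          rw [η.2 (L.map h)]
      _ = LinearMap.comp (η.1 (L.obj y))
            (LinearMap.comp ((L ⋙ F').map h).hom.hom (α.app x).hom.hom) :=
          LinearMap.comp_assoc _ _ _
      _ = LinearMap.comp (η.1 (L.obj y)) (LinearMap.comp (α.app y).hom.hom (F.map h).hom.hom) := by
          rw [← Tnat]
      _ = LinearMap.comp (LinearMap.comp (η.1 (L.obj y)) (α.app y).hom.hom) (F.map h).hom.hom :=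
          (LinearMap.comp_assoc _ _ _).symm
  · -- injectivity
    intro η η' hEq
    have hEq' : ∀ x : C, (η.1 (L.obj x)).comp (α.app x).hom.hom =
        (η'.1 (L.obj x)).comp (α.app x).hom.hom := by
      intro x
      exact congrFun (congrArg Subtype.val hEq) x
    have h1 : natLinToHom η = natLinToHom η' := by
      apply F'.hom_ext_of_isLeftKanExtension α
      apply NatTrans.ext
      funext x
      exact FGModuleCat.hom_ext (hEq' x)
    apply Subtype.ext
    funext d
    exact FGModuleCat.hom_ext_iff.mp (congrFun (congrArg NatTrans.app h1) d)
  · -- surjectivity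
    intro ζ
    refine ⟨⟨fun d => ((F'.descOfIsLeftKanExtension α G (natLinToHom ζ)).app d).hom.hom,
      fun d d' h => FGModuleCat.hom_ext_iff.mp
        ((F'.descOfIsLeftKanExtension α G (natLinToHom ζ)).naturality h).symm⟩, ?_⟩
    apply Subtype.ext
    funext x
    exact FGModuleCat.hom_ext_iff.mp (F'.descOfIsLeftKanExtension_fac_app α G (natLinToHom ζ) x)

lemma finrank_natLin_dsum [Finite C] (A : C ⥤ FGModuleCat.{v} k) (B : C ⥤ FGModuleCat.{v₂} k)
    (I : C ⥤ FGModuleCat.{v₃} k) :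
    Module.finrank k (NatLin2 k (dsum.{0, v, v₂} A B) I) =
      Module.finrank k (NatLin2 k A I) + Module.finrank k (NatLin2 k B I) := by
  rw [← Module.finrank_prod (R := k) (M := NatLin2 k A I) (M' := NatLin2 k B I)]
  have natA : ∀ (η : NatLin2 k (dsum.{0, v, v₂} A B) I) ⦃x y : C⦄ (h : x ⟶ y),
      LinearMap.comp (I.map h).hom.hom ((η.1 x).comp (LinearMap.inl k (A.obj x) (B.obj x))) =
      LinearMap.comp ((η.1 y).comp (LinearMap.inl k (A.obj y) (B.obj y))) (A.map h).hom.hom := by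
    intro η x y h
    apply LinearMap.ext
    intro v
    have h1 := natLin_apply η h (LinearMap.inl k (A.obj x) (B.obj x) v)
    show (I.map h).hom.hom (η.1 x (LinearMap.inl k (A.obj x) (B.obj x) v)) =
      η.1 y (LinearMap.inl k (A.obj y) (B.obj y) ((A.map h).hom.hom v))
    rw [h1]
    congr 1
    show LinearMap.prodMap (A.map h).hom.hom (B.map h).hom.hom (v, (0 : B.obj x)) = (((A.map h).hom.hom v), (0 : B.obj y))
    simp
  have natB : ∀ (η : NatLin2 k (dsum.{0, v, v₂} A B) I) ⦃x y : C⦄ (h : x ⟶ y),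
      LinearMap.comp (I.map h).hom.hom ((η.1 x).comp (LinearMap.inr k (A.obj x) (B.obj x))) =
      LinearMap.comp ((η.1 y).comp (LinearMap.inr k (A.obj y) (B.obj y))) (B.map h).hom.hom := by
    intro η x y h
    apply LinearMap.ext
    intro v
    have h1 := natLin_apply η h (LinearMap.inr k (A.obj x) (B.obj x) v)
    show (I.map h).hom.hom (η.1 x (LinearMap.inr k (A.obj x) (B.obj x) v)) =
      η.1 y (LinearMap.inr k (A.obj y) (B.obj y) ((B.map h).hom.hom v))
    rw [h1]
    congr 1
    show LinearMap.prodMap (A.map h).hom.hom (B.map h).hom.hom ((0 : A.obj x), v) = ((0 : A.obj y), ((B.map h).hom.hom v))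
    simp
  have natC : ∀ (σ : NatLin2 k A I × NatLin2 k B I) ⦃x y : C⦄ (h : x ⟶ y),
      LinearMap.comp (I.map h).hom.hom (LinearMap.coprod (σ.1.1 x) (σ.2.1 x)) =
      LinearMap.comp (LinearMap.coprod (σ.1.1 y) (σ.2.1 y)) ((dsum.{0, v, v₂} A B).map h).hom.hom := by
    intro σ x y h
    apply LinearMap.ext
    intro vw
    show (I.map h).hom.hom (σ.1.1 x vw.1 + σ.2.1 x vw.2) =
      LinearMap.coprod (σ.1.1 y) (σ.2.1 y) (LinearMap.prodMap (A.map h).hom.hom (B.map h).hom.hom vw)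
    rw [map_add]
    have e1 := natLin_apply σ.1 h vw.1
    have e2 := natLin_apply σ.2 h vw.2
    rw [e1, e2]
    rfl
  refine LinearEquiv.finrank_eq (LinearEquiv.ofLinear
    ({ toFun := fun η =>
        (⟨fun x => (η.1 x).comp (LinearMap.inl k (A.obj x) (B.obj x)), natA η⟩,
         ⟨fun x => (η.1 x).comp (LinearMap.inr k (A.obj x) (B.obj x)), natB η⟩)
       map_add' := fun η η' => rfl
       map_smul' := fun c η => rfl } :
      NatLin2 k (dsum.{0, v, v₂} A B) I →ₗ[k] (NatLin2 k A I × NatLin2 k B I))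
    ({ toFun := fun σ => ⟨fun x => LinearMap.coprod (σ.1.1 x) (σ.2.1 x), natC σ⟩
       map_add' := fun σ σ' => by
        apply Subtype.ext
        funext x
        apply LinearMap.ext
        intro vw
        show (σ.1.1 x + σ'.1.1 x) vw.1 + (σ.2.1 x + σ'.2.1 x) vw.2 =
          (σ.1.1 x vw.1 + σ.2.1 x vw.2) + (σ'.1.1 x vw.1 + σ'.2.1 x vw.2)
        simp only [LinearMap.add_apply]
        abel
       map_smul' := fun c σ => by
        apply Subtype.ext
        funext x
        apply LinearMap.ext
        intro vw
        show (c • σ.1.1 x) vw.1 + (c • σ.2.1 x) vw.2 = c • (σ.1.1 x vw.1 + σ.2.1 x vw.2)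
        simp only [LinearMap.smul_apply, smul_add] } :
      (NatLin2 k A I × NatLin2 k B I) →ₗ[k] NatLin2 k (dsum.{0, v, v₂} A B) I) ?_ ?_)
  · -- toF ∘ invF = id on the product
    apply LinearMap.ext
    intro σ
    apply Prod.ext
    · apply Subtype.ext
      funext x
      apply LinearMap.ext
      intro v
      show σ.1.1 x v + σ.2.1 x (0 : B.obj x) = σ.1.1 x v
      rw [map_zero, add_zero]
    · apply Subtype.ext
      funext x
      apply LinearMap.ext
      intro v
      show σ.1.1 x (0 : A.obj x) + σ.2.1 x v = σ.2.1 x v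
      rw [map_zero, zero_add]
  · -- invF ∘ toF = id
    apply LinearMap.ext
    intro η
    apply Subtype.ext
    funext x
    apply LinearMap.ext
    intro vw
    change ↑(A.obj x) × ↑(B.obj x) at vw
    show η.1 x (LinearMap.inl k (A.obj x) (B.obj x) vw.1) +
      η.1 x (LinearMap.inr k (A.obj x) (B.obj x) vw.2) = η.1 x vw
    refine ((η.1 x).map_add _ _).symm.trans ?_
    congr 1
    show (vw.1, (0 : B.obj x)) + ((0 : A.obj x), vw.2) = vw
    rw [Prod.mk_add_mk, add_zero, zero_add]

end NatLin

/-! ### The front and back functors, and the iterated test functors -/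

section Assembly
open CategoryTheory
variable (k : Type) [Field k]
variable (htree : (SimpleGraph.fromRel (fun a b : P => a ⋖ b)).IsTree)
  {r : P} (hr : IsMin r) (hu : ∀ m : P, IsMin m → m = r)

/-- The parent functor. -/
noncomputable def paF : P ⥤ P := (pa_mono htree hr hu).functor

include htree hr in
lemma covBack_eq : covBack P = covFront P ⋙ paF htree hr hu := by
  apply CategoryTheory.Functor.ext
  · intro X Y f
    exact Subsingleton.elim _ _
  · intro e
    show e.src = pa hu e.tgt
    exact (pa_tgt htree hr hu e).symm

/-- The iterated test functors. -/
noncomputable def Igs (p : P) (n : ℕ) : P ⥤ FGModuleCat k :=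
  Ig k hr p (fun y => (pa hu)^[n] y)
    (fun _ _ h => (pa_mono htree hr hu).iterate n h)

lemma finrank_natLin_univ (X : P ⥤ FGModuleCat.{v} k) (p : P) (n : ℕ) :
    Module.finrank k (NatLin k X (Igs k htree hr hu p n)) =
      Module.finrank k (NatLin2 k X (Igs k htree hr hu p n : P ⥤ FGModuleCat.{0} k)) :=
  finrank_natLin_post X _ _ (fun y => wmEquiv k r p ((pa hu)^[n] y)) (fun y z h w => rfl)

lemma back_step (p : P) (n : ℕ) :
    covBack P ⋙ Igs k htree hr hu p n = covFront P ⋙ Igs k htree hr hu p (n + 1) := by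
  rw [covBack_eq htree hr hu, Functor.assoc]
  rfl


include htree hr hu in
lemma finrank_natLin_base (N : Cov P ⥤ FGModuleCat k) (e : Cov P) :
    Module.finrank k (NatLin k N (covFront P ⋙ Igs k htree hr hu e.tgt 0)) =
      Module.finrank k (N.obj e : Type _) := by
  rw [← Subspace.dual_finrank_eq (K := k) (V := (N.obj e : Type _))]
  refine LinearEquiv.finrank_eq (LinearEquiv.ofBijective
    ({ toFun := fun η =>
        { toFun := fun v => ((η.1 e v).1 ⟨le_refl e.tgt⟩).down
          map_add' := fun v w => by
            show ((η.1 e (v + w)).1 ⟨le_refl e.tgt⟩).down = _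
            rw [map_add]; rfl
          map_smul' := fun c v => by
            show ((η.1 e (c • v)).1 ⟨le_refl e.tgt⟩).down = _
            rw [map_smul]; rfl }
       map_add' := fun η η' => rfl
       map_smul' := fun c η => rfl } :
      NatLin k N (covFront P ⋙ Igs k htree hr hu e.tgt 0) →ₗ[k]
        Module.Dual k (N.obj e : Type _)) ⟨?_, ?_⟩)
  · -- injective
    intro η η' hEq
    apply Subtype.ext
    funext f
    apply LinearMap.ext
    intro v
    apply Subtype.ext
    funext hx
    have hle : f ≤ e := cov_le_of_tgt_le htree hr hu hx.down
    have h1 : (((covFront P ⋙ Igs k htree hr hu e.tgt 0).map (homOfLE hle)).hom.hom (η.1 f v)).1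
        ⟨le_refl e.tgt⟩ = (η.1 e ((N.map (homOfLE hle)).hom.hom v)).1 ⟨le_refl e.tgt⟩ := by
      rw [natLin_apply η (homOfLE hle) v]
    have h1' : (((covFront P ⋙ Igs k htree hr hu e.tgt 0).map (homOfLE hle)).hom.hom (η'.1 f v)).1
        ⟨le_refl e.tgt⟩ = (η'.1 e ((N.map (homOfLE hle)).hom.hom v)).1 ⟨le_refl e.tgt⟩ := by
      rw [natLin_apply η' (homOfLE hle) v]
    have h2 : (η.1 f v).1 hx = (η.1 e ((N.map (homOfLE hle)).hom.hom v)).1 ⟨le_refl e.tgt⟩ := h1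
    have h2' : (η'.1 f v).1 hx = (η'.1 e ((N.map (homOfLE hle)).hom.hom v)).1 ⟨le_refl e.tgt⟩ := h1'
    rw [h2, h2']
    exact congrArg ULift.up (LinearMap.congr_fun hEq ((N.map (homOfLE hle)).hom.hom v))
  · -- surjective
    intro lam
    refine ⟨⟨fun f =>
      { toFun := fun v =>
          ⟨fun hx => ULift.up (lam ((N.map (homOfLE (cov_le_of_tgt_le htree hr hu hx.down))).hom.hom v)),
           fun habs => absurd habs (cov_tgt_ne hr f)⟩
        map_add' := fun v w => by
          apply Subtype.ext
          funext hx
          show ULift.up (lam ((N.map _).hom.hom (v + w))) = _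
          rw [map_add, map_add]
          rfl
        map_smul' := fun c v => by
          apply Subtype.ext
          funext hx
          show ULift.up (lam ((N.map _).hom.hom (c • v))) = _
          rw [map_smul, map_smul]
          rfl }, ?_⟩, ?_⟩
    · -- naturality
      intro f f' h
      apply LinearMap.ext
      intro v
      apply Subtype.ext
      funext hx
      show ULift.up (lam (N.map (homOfLE (cov_le_of_tgt_le htree hr hu
          (le_trans (Cov.tgt_mono (leOfHom h)) hx.down))) v)) =
        ULift.up (lam (N.map (homOfLE (cov_le_of_tgt_le htree hr hu hx.down)) (N.map h v)))
      have hcomp : (homOfLE (cov_le_of_tgt_le htree hr hu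
          (le_trans (Cov.tgt_mono (leOfHom h)) hx.down)) : f ⟶ e) =
          h ≫ homOfLE (cov_le_of_tgt_le htree hr hu hx.down) :=
        Subsingleton.elim _ _
      rw [hcomp, CategoryTheory.Functor.map_comp]
      rfl
    · -- value at e
      apply LinearMap.ext
      intro v
      show lam ((N.map (homOfLE (cov_le_of_tgt_le htree hr hu (le_refl e.tgt)))).hom.hom v) = lam v
      have : (homOfLE (cov_le_of_tgt_le htree hr hu (le_refl e.tgt)) : e ⟶ e) = 𝟙 e :=
        Subsingleton.elim _ _
      rw [this, CategoryTheory.Functor.map_id]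
      rfl

include htree hr hu in
lemma finrank_natLin_top (N : Cov P ⥤ FGModuleCat k) (p : P) {n : ℕ}
    (hn : ∀ y : P, (pa hu)^[n] y = r) :
    Module.finrank k (NatLin k N (covFront P ⋙ Igs k htree hr hu p n)) = 0 := by
  apply finrank_natLin_zero
  intro f
  exact wm_subsingleton k p (hn f.tgt)

end Assembly
end St8

open St8

theorem statement8 (k : Type) [Field k] (P : Type) [Fintype P] [PartialOrder P]
    -- the Hasse diagram of `P` is a tree ...
    (htree : (SimpleGraph.fromRel (fun a b : P => a ⋖ b)).IsTree)
    -- ... which is rooted: `P` has a unique minimal element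
    (hroot : ∃! m : P, IsMin m)
    (U V : Cov P ⥤ FGModuleCat k)
    -- the left divergence of `[U] − [V]` vanishes:
    -- a natural isomorphism `L_φ(U) ⊕ L_β(V) ≅ L_φ(V) ⊕ L_β(U)`
    (hdiv : ∃ (A B C D : P ⥤ FGModuleCat k)
      (a : U ⟶ covFront P ⋙ A) (b : V ⟶ covBack P ⋙ B)
      (c : V ⟶ covFront P ⋙ C) (d : U ⟶ covBack P ⋙ D),
      A.IsLeftKanExtension a ∧ B.IsLeftKanExtension b ∧
      C.IsLeftKanExtension c ∧ D.IsLeftKanExtension d ∧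
      Nonempty (dsum A B ≅ dsum C D)) :
    ∀ e : Cov P, Module.finrank k (U.obj e) = Module.finrank k (V.obj e) := by
  obtain ⟨r, hr, hu⟩ := hroot
  intro e
  obtain ⟨A, B, Cc, D, a, b, c, d, hA, hB, hC, hD, ⟨θ⟩⟩ := hdiv
  haveI := hA; haveI := hB; haveI := hC; haveI := hD
  have main : ∀ n : ℕ,
      Module.finrank k (NatLin k U (covFront P ⋙ Igs k htree hr hu e.tgt n)) +
        Module.finrank k (NatLin k V (covBack P ⋙ Igs k htree hr hu e.tgt n)) =
      Module.finrank k (NatLin k V (covFront P ⋙ Igs k htree hr hu e.tgt n)) +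
        Module.finrank k (NatLin k U (covBack P ⋙ Igs k htree hr hu e.tgt n)) := by
    intro n
    rw [← finrank_natLin_kan (covFront P) U A a,
        ← finrank_natLin_kan (covBack P) V B b,
        ← finrank_natLin_kan (covFront P) V Cc c,
        ← finrank_natLin_kan (covBack P) U D d,
        finrank_natLin_univ k htree hr hu A, finrank_natLin_univ k htree hr hu B,
        finrank_natLin_univ k htree hr hu Cc, finrank_natLin_univ k htree hr hu D,
        ← finrank_natLin_dsum A B, ← finrank_natLin_dsum Cc D]
    exact finrank_natLin_iso θ _
  have step : ∀ n : ℕ,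
      Module.finrank k (NatLin k U (covFront P ⋙ Igs k htree hr hu e.tgt n)) +
      Module.finrank k (NatLin k V (covFront P ⋙ Igs k htree hr hu e.tgt (n+1))) =
      Module.finrank k (NatLin k V (covFront P ⋙ Igs k htree hr hu e.tgt n)) +
      Module.finrank k (NatLin k U (covFront P ⋙ Igs k htree hr hu e.tgt (n+1))) := by
    intro n
    have h0 := main n
    rw [back_step k htree hr hu e.tgt n, back_step k htree hr hu e.tgt n] at h0
    exact h0
  have tel : ∀ n : ℕ,
      Module.finrank k (NatLin k U (covFront P ⋙ Igs k htree hr hu e.tgt 0)) +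
      Module.finrank k (NatLin k V (covFront P ⋙ Igs k htree hr hu e.tgt n)) =
      Module.finrank k (NatLin k V (covFront P ⋙ Igs k htree hr hu e.tgt 0)) +
      Module.finrank k (NatLin k U (covFront P ⋙ Igs k htree hr hu e.tgt n)) := by
    intro n
    induction n with
    | zero => omega
    | succ n ih =>
      have h1 := step n
      omega
  obtain ⟨Nn, hN⟩ := pa_iter_uniform htree hr hu
  have hUN := finrank_natLin_top k htree hr hu U e.tgt hN
  have hVN := finrank_natLin_top k htree hr hu V e.tgt hN
  have hU0 := finrank_natLin_base k htree hr hu U e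
  have hV0 := finrank_natLin_base k htree hr hu V e
  have hfin := tel Nn
  rw [hUN, hVN] at hfin
  rw [hU0, hV0] at hfin
  omega
end

section
/- Let P be a finite poset, let T ⊆ H_P be a line connected subgraph that is a tree, let P_T be the sub-poset generated by T, and let M be a kP-module whose gradient vanishes on T (i.e. there is a natural isomorphism β*(M_T) ≅ φ*(M_T)). Then: (a) for any two covering relations u ⋖ v and u ⋖ v′ of P_T with the same source, ker M(u ≤ v) = ker M(u ≤ v′) as subspaces of M(u), and for any two covering relations w ⋖ u and w′ ⋖ u of P_T with the same target, im M(w ≤ u) = im M(w′ ≤ u) as subspaces of M(u); (b) for any two covering relations u ⋖ v and s ⋖ t of P_T, ker M(u ≤ v) ≅ ker M(s ≤ t) and im M(u ≤ v) ≅ im M(s ≤ t) as k-vector spaces. -/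
open Relation in
lemma lemA {V : Type} (Tv : Set V) (Te : Set (V × V))
    (hne : ∀ e ∈ Te, e.1 ≠ e.2 ∧ e.1 ∈ Tv ∧ e.2 ∈ Tv)
    (htree : (SimpleGraph.fromRel (fun a b : ↥Tv => ((a : V), (b : V)) ∈ Te)).IsTree)
    (hlc : (SimpleGraph.fromRel (fun e f : ↥Te => (e : V × V).2 = (f : V × V).1)).Connected)
    (e f : ↥Te) (hef : e ≠ f) (h1 : (e : V × V).1 = (f : V × V).1) :
    ∃ g ∈ Te, g.2 = (e : V × V).1 := by
  classical
  by_contra hno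
  push_neg at hno
  set G := SimpleGraph.fromRel (fun a b : ↥Tv => ((a : V), (b : V)) ∈ Te) with hG
  set L := SimpleGraph.fromRel (fun e f : ↥Te => (e : V × V).2 = (f : V × V).1) with hL
  -- source and target of an edge, as vertices of the tree
  let src : ↥Te → ↥Tv := fun h => ⟨(h : V × V).1, (hne _ h.2).2.1⟩
  let tgt : ↥Te → ↥Tv := fun h => ⟨(h : V × V).2, (hne _ h.2).2.2⟩
  have hadj : ∀ h : ↥Te, G.Adj (src h) (tgt h) := by
    intro h
    rw [hG, SimpleGraph.fromRel_adj]
    refine ⟨?_, Or.inl ?_⟩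
    · intro hcon
      exact (hne _ h.2).1 (congrArg Subtype.val hcon)
    · show ((h : V × V).1, (h : V × V).2) ∈ Te
      rw [Prod.mk.eta]; exact h.2
  set ue : ↥Tv := src e with hue
  set ve : ↥Tv := tgt e with hve
  -- the set of tree vertices reachable from ve avoiding ue
  set R : ↥Tv → ↥Tv → Prop := fun a b => G.Adj a b ∧ b ≠ ue with hR
  set Sv : Set ↥Tv := {x | ReflTransGen R ve x} with hSv
  have hvene : ve ≠ ue := by
    intro hcon
    exact (hne _ e.2).1 (congrArg Subtype.val hcon).symm
  have hSne : ∀ x ∈ Sv, x ≠ ue := by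
    intro x hx
    induction hx with
    | refl => exact hvene
    | tail _ h2 _ => exact h2.2
  have hSstep : ∀ x ∈ Sv, ∀ y : ↥Tv, G.Adj x y → y ≠ ue → y ∈ Sv := by
    intro x hx y hA hne'
    exact ReflTransGen.tail hx ⟨hA, hne'⟩
  -- walks avoiding ue
  have hwalk : ∀ x ∈ Sv, ∃ w : G.Walk ve x, ∀ y ∈ w.support, y ≠ ue := by
    intro x hx
    induction hx with
    | refl => exact ⟨SimpleGraph.Walk.nil, by simp [hvene]⟩
    | @tail b c _ h2 ih =>
      obtain ⟨w, hw⟩ := ih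
      refine ⟨w.concat h2.1, ?_⟩
      intro y hy
      rw [SimpleGraph.Walk.support_concat, List.mem_append] at hy
      rcases hy with hy | hy
      · exact hw y hy
      · simp at hy; subst hy; exact h2.2
  -- acyclicity: only one tree edge from ue into Sv
  have hkey : ∀ x ∈ Sv, G.Adj ue x → x = ve := by
    intro x hx hA
    obtain ⟨w, hw⟩ := hwalk x hx
    have hp1 : (SimpleGraph.Walk.cons (hadj e) w.bypass).IsPath := by
      refine SimpleGraph.Walk.IsPath.cons w.bypass_isPath ?_
      intro hcon
      exact hw ue (w.support_bypass_subset hcon) rfl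
    have hp2 : (SimpleGraph.Walk.cons hA SimpleGraph.Walk.nil).IsPath := by
      simp only [SimpleGraph.Walk.cons_isPath_iff]
      refine ⟨SimpleGraph.Walk.IsPath.nil, ?_⟩
      simp only [SimpleGraph.Walk.support_nil, List.mem_singleton]
      exact fun hcon => hSne x hx hcon.symm
    have := SimpleGraph.isAcyclic_iff_path_unique.mp htree.IsAcyclic
      ⟨_, hp1⟩ ⟨_, hp2⟩
    have hsup : ve ∈ (SimpleGraph.Walk.cons hA SimpleGraph.Walk.nil).support := by
      rw [← congrArg (fun p => (Subtype.val p).support) this]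
      simp only [SimpleGraph.Walk.support_cons, List.mem_cons]
      exact Or.inr w.bypass.start_mem_support
    simp only [SimpleGraph.Walk.support_cons, SimpleGraph.Walk.support_nil,
      List.mem_cons, List.mem_singleton, List.not_mem_nil, or_false] at hsup
    rcases hsup with hsup | hsup
    · exact absurd hsup hvene
    · exact hsup.symm
  -- the closed set of line-graph vertices
  set S : Set ↥Te := {h | h = e ∨ (src h ∈ Sv ∧ tgt h ∈ Sv)} with hS
  have hveSv : ve ∈ Sv := ReflTransGen.refl
  have hclosed : ∀ h h' : ↥Te, h ∈ S → L.Adj h h' → h' ∈ S := by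
    intro h h' hh hA
    rw [hL, SimpleGraph.fromRel_adj] at hA
    obtain ⟨hne', hcase⟩ := hA
    have h'2ne : (h' : V × V).2 ≠ (ue : V) := hno _ h'.2
    rcases hh with rfl | ⟨hs, ht⟩
    · rcases hcase with hc | hc
      · have hsrc : src h' = ve := Subtype.ext hc.symm
        have hs' : src h' ∈ Sv := by rw [hsrc]; exact hveSv
        refine Or.inr ⟨hs', hSstep _ hs' _ (hadj h') ?_⟩
        exact fun hcon => h'2ne (congrArg Subtype.val hcon)
      · exact absurd hc (hno _ h'.2)
    · rcases hcase with hc | hc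
      · have hsrc : src h' = tgt h := Subtype.ext hc.symm
        have hs' : src h' ∈ Sv := by rw [hsrc]; exact ht
        refine Or.inr ⟨hs', hSstep _ hs' _ (hadj h') ?_⟩
        exact fun hcon => h'2ne (congrArg Subtype.val hcon)
      · have htgt : tgt h' = src h := Subtype.ext hc
        have ht' : tgt h' ∈ Sv := by rw [htgt]; exact hs
        by_cases hu : src h' = ue
        · have hv : tgt h' = ve := by
            refine hkey _ ht' ?_
            have h2 := hadj h'
            rwa [hu] at h2
          left
          apply Subtype.ext
          exact Prod.ext (congrArg Subtype.val hu) (congrArg Subtype.val hv)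
        · exact Or.inr ⟨hSstep _ ht' _ (hadj h').symm hu, ht'⟩
  have hreach : L.Reachable e f := hlc.preconnected e f
  obtain ⟨w⟩ := hreach
  have hfS : f ∈ S := by
    have hgen : ∀ (a b : ↥Te) (w : L.Walk a b), a ∈ S → b ∈ S := by
      intro a b w
      induction w with
      | nil => exact id
      | cons hA _ ih => exact fun ha => ih (hclosed _ _ ha hA)
    exact hgen e f w (Or.inl rfl)
  rcases hfS with rfl | ⟨hs, _⟩
  · exact hef rfl
  · exact hSne _ hs (Subtype.ext h1.symm)

open Relation in
lemma lemA' {V : Type} (Tv : Set V) (Te : Set (V × V))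
    (hne : ∀ e ∈ Te, e.1 ≠ e.2 ∧ e.1 ∈ Tv ∧ e.2 ∈ Tv)
    (htree : (SimpleGraph.fromRel (fun a b : ↥Tv => ((a : V), (b : V)) ∈ Te)).IsTree)
    (hlc : (SimpleGraph.fromRel (fun e f : ↥Te => (e : V × V).2 = (f : V × V).1)).Connected)
    (e f : ↥Te) (hef : e ≠ f) (h2 : (e : V × V).2 = (f : V × V).2) :
    ∃ g ∈ Te, g.1 = (e : V × V).2 := by
  set Te' : Set (V × V) := {p | (p.2, p.1) ∈ Te} with hTe'
  have hmem : ∀ p : V × V, p ∈ Te → (p.2, p.1) ∈ Te' := by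
    intro p hp
    show ((p.2, p.1).2, (p.2, p.1).1) ∈ Te
    simpa using hp
  set σ : ↥Te → ↥Te' := fun g => ⟨((g : V × V).2, (g : V × V).1), hmem _ g.2⟩ with hσ
  have hσinj : Function.Injective σ := by
    intro a b hab
    have h := congrArg Subtype.val hab
    exact Subtype.ext (Prod.ext (congrArg Prod.snd h) (congrArg Prod.fst h))
  have hσsurj : Function.Surjective σ := by
    intro b
    refine ⟨⟨((b : V × V).2, (b : V × V).1), b.2⟩, ?_⟩
    apply Subtype.ext
    simp [σ]
  have hne' : ∀ p ∈ Te', p.1 ≠ p.2 ∧ p.1 ∈ Tv ∧ p.2 ∈ Tv := by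
    intro p hp
    obtain ⟨h1, h2, h3⟩ := hne _ hp
    exact ⟨h1.symm, h3, h2⟩
  have htree' : (SimpleGraph.fromRel (fun a b : ↥Tv => ((a : V), (b : V)) ∈ Te')).IsTree := by
    have : (SimpleGraph.fromRel (fun a b : ↥Tv => ((a : V), (b : V)) ∈ Te'))
        = SimpleGraph.fromRel (fun a b : ↥Tv => ((a : V), (b : V)) ∈ Te) := by
      ext a b
      simp only [SimpleGraph.fromRel_adj]
      constructor
      · rintro ⟨h, hc⟩; exact ⟨h, hc.symm⟩
      · rintro ⟨h, hc⟩; exact ⟨h, hc.symm⟩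
    rw [this]; exact htree
  have hlc' : (SimpleGraph.fromRel
      (fun e f : ↥Te' => (e : V × V).2 = (f : V × V).1)).Connected := by
    have hiso : (SimpleGraph.fromRel (fun e f : ↥Te => (e : V × V).2 = (f : V × V).1)) ≃g
        (SimpleGraph.fromRel (fun e f : ↥Te' => (e : V × V).2 = (f : V × V).1)) := by
      refine ⟨Equiv.ofBijective σ ⟨hσinj, hσsurj⟩, ?_⟩
      intro a b
      simp only [Equiv.ofBijective_apply, SimpleGraph.fromRel_adj]
      constructor
      · rintro ⟨h, hc⟩
        refine ⟨fun hcon => h (congrArg σ hcon), ?_⟩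
        rcases hc with hc | hc
        · exact Or.inr hc.symm
        · exact Or.inl hc.symm
      · rintro ⟨h, hc⟩
        refine ⟨fun hcon => h (hσinj hcon), ?_⟩
        rcases hc with hc | hc
        · exact Or.inr hc.symm
        · exact Or.inl hc.symm
    exact hiso.connected_iff.mp hlc
  obtain ⟨g, hg, hg1⟩ := lemA Tv Te' hne' htree' hlc' (σ e) (σ f)
    (fun hcon => hef (hσinj hcon)) h2
  exact ⟨(g.2, g.1), hg, hg1⟩


lemma ptle_le {P : Type} [PartialOrder P] {Tv : Set P} {Te : Set (P × P)}
    (hTe : ∀ e ∈ Te, (e.1 ⋖ e.2) ∧ e.1 ∈ Tv ∧ e.2 ∈ Tv) {a b : ↥Tv}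
    (h : ptle Tv Te a b) : (a : P) ≤ (b : P) := by
  induction h with
  | refl => exact le_refl _
  | tail _ h2 ih => exact ih.trans (hTe _ h2).1.le

lemma ptcov_mem {P : Type} [PartialOrder P] {Tv : Set P} {Te : Set (P × P)}
    (hTe : ∀ e ∈ Te, (e.1 ⋖ e.2) ∧ e.1 ∈ Tv ∧ e.2 ∈ Tv) {u v : ↥Tv}
    (h : ptcov Tv Te u v) : ((u : P), (v : P)) ∈ Te := by
  obtain ⟨⟨hle, hnle⟩, hcov⟩ := h
  rcases Relation.ReflTransGen.cases_head hle with heq | ⟨x, hx, hxv⟩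
  · subst heq; exact absurd Relation.ReflTransGen.refl hnle
  · by_cases hxv' : x = v
    · subst hxv'; exact hx
    · exfalso
      refine hcov x ⟨Relation.ReflTransGen.single hx, ?_⟩ ⟨hxv, ?_⟩
      · intro hcon
        exact absurd ((hTe _ hx).1.lt.trans_le (ptle_le hTe hcon)) (lt_irrefl _)
      · intro hcon
        exact hxv' (Subtype.ext (le_antisymm (ptle_le hTe hxv) (ptle_le hTe hcon)))

lemma pmod_congr {k P : Type} [Field k] [PartialOrder P] (M : PModule k P)
    {a a' b b' : P} (ha : a = a') (hb : b = b') (h : a ≤ b) (h' : a' ≤ b') :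
    Module.finrank k (LinearMap.ker (M.map h)) = Module.finrank k (LinearMap.ker (M.map h')) ∧
    Module.finrank k (LinearMap.range (M.map h)) =
      Module.finrank k (LinearMap.range (M.map h')) := by
  subst ha; subst hb; exact ⟨rfl, rfl⟩

theorem statement10 (k : Type) [Field k] (P : Type) [Fintype P] [PartialOrder P]
    (Tv : Set P) (Te : Set (P × P))
    -- `T` is a subgraph of the Hasse diagram `H_P`, with vertex set `Tv` and edge set `Te`
    (hTe : ∀ e ∈ Te, (e.1 ⋖ e.2) ∧ e.1 ∈ Tv ∧ e.2 ∈ Tv)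
    -- `T` is a tree: its underlying undirected graph is connected and acyclic
    (htree : (SimpleGraph.fromRel (fun a b : ↥Tv => ((a : P), (b : P)) ∈ Te)).IsTree)
    -- `T` is line connected: the line digraph of `T` is connected as an undirected graph
    (hlc : (SimpleGraph.fromRel (fun e f : ↥Te => (e : P × P).2 = (f : P × P).1)).Connected)
    (M : PModule k P)
    -- the gradient of `M` vanishes on `T`: a natural isomorphism `β*(M_T) ≅ φ*(M_T)`
    (hgrad : ∃ α : ∀ e : ↥Te, (M.V (e : P × P).1 ≃ₗ[k] M.V (e : P × P).2),
      ∀ (e f : ↥Te), tline Te e f →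
        ∀ (h1 : (e : P × P).1 ≤ (f : P × P).1) (h2 : (e : P × P).2 ≤ (f : P × P).2),
          (α f).toLinearMap.comp (M.map h1) = (M.map h2).comp (α e).toLinearMap) :
    -- (a) kernels agree for covering relations with common source
    (∀ u v v' : ↥Tv, ptcov Tv Te u v → ptcov Tv Te u v' →
      ∀ (h : (u : P) ≤ (v : P)) (h' : (u : P) ≤ (v' : P)),
        LinearMap.ker (M.map h) = LinearMap.ker (M.map h')) ∧
    -- (a) images agree for covering relations with common target
    (∀ w w' u : ↥Tv, ptcov Tv Te w u → ptcov Tv Te w' u →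
      ∀ (h : (w : P) ≤ (u : P)) (h' : (w' : P) ≤ (u : P)),
        LinearMap.range (M.map h) = LinearMap.range (M.map h')) ∧
    -- (b) kernels and images on any two covering relations of `P_T` are isomorphic
    (∀ u v s t : ↥Tv, ptcov Tv Te u v → ptcov Tv Te s t →
      ∀ (h : (u : P) ≤ (v : P)) (h' : (s : P) ≤ (t : P)),
        Nonempty (↥(LinearMap.ker (M.map h)) ≃ₗ[k] ↥(LinearMap.ker (M.map h'))) ∧
        Nonempty (↥(LinearMap.range (M.map h)) ≃ₗ[k] ↥(LinearMap.range (M.map h')))) := by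
  classical
  obtain ⟨α, hα⟩ := hgrad
  have hne : ∀ e ∈ Te, e.1 ≠ e.2 ∧ e.1 ∈ Tv ∧ e.2 ∈ Tv :=
    fun e he => ⟨(hTe e he).1.ne, (hTe e he).2⟩
  have hstep : ∀ (e f : ↥Te) (hc : (e : P × P).2 = (f : P × P).1)
      (h1 : (e : P × P).1 ≤ (f : P × P).1) (h2 : (e : P × P).2 ≤ (f : P × P).2),
      LinearMap.ker (M.map h1) =
        Submodule.comap (α e).toLinearMap (LinearMap.ker (M.map h2)) ∧
      LinearMap.range (M.map h2) =
        Submodule.map (α f).toLinearMap (LinearMap.range (M.map h1)) := by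
    intro e f hc h1 h2
    have heq := hα e f (Relation.ReflTransGen.single hc) h1 h2
    constructor
    · have h3 := congrArg LinearMap.ker heq
      rwa [LinearMap.ker_comp_of_ker_eq_bot _
        (LinearMap.ker_eq_bot_of_injective (α f).injective),
        LinearMap.ker_comp] at h3
    · have h3 := congrArg LinearMap.range heq
      rw [LinearMap.range_comp,
        LinearMap.range_comp_of_range_eq_top _
          (LinearMap.range_eq_top_of_surjective _ (α e).surjective)] at h3
      exact h3.symm
  refine ⟨?_, ?_, ?_⟩
  · -- kernels with common source
    intro u v v' hcov hcov' h h'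
    by_cases hvv : v = v'
    · subst hvv; rfl
    · have he : ((u : P), (v : P)) ∈ Te := ptcov_mem hTe hcov
      have hf : ((u : P), (v' : P)) ∈ Te := ptcov_mem hTe hcov'
      have hnef : (⟨((u : P), (v : P)), he⟩ : ↥Te) ≠ ⟨((u : P), (v' : P)), hf⟩ := by
        intro hcon
        exact hvv (Subtype.ext (congrArg (fun x : ↥Te => x.val.2) hcon))
      obtain ⟨g, hg, hg2⟩ := lemA Tv Te hne htree hlc ⟨_, he⟩ ⟨_, hf⟩ hnef rfl
      have hg' : ((g.1, (u : P)) : P × P) ∈ Te := by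
        rw [show ((g.1, (u : P)) : P × P) = g from Prod.ext rfl hg2.symm]; exact hg
      have hle1 : g.1 ≤ (u : P) := (hTe _ hg').1.le
      obtain ⟨hk, -⟩ := hstep ⟨(g.1, (u : P)), hg'⟩ ⟨((u : P), (v : P)), he⟩ rfl hle1 h
      obtain ⟨hk', -⟩ := hstep ⟨(g.1, (u : P)), hg'⟩ ⟨((u : P), (v' : P)), hf⟩ rfl hle1 h'
      have h3 := hk.symm.trans hk'
      exact Submodule.comap_injective_of_surjective
        (α ⟨(g.1, (u : P)), hg'⟩).surjective h3
  · -- ranges with common target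
    intro w w' u hcov hcov' h h'
    by_cases hww : w = w'
    · subst hww; rfl
    · have he : ((w : P), (u : P)) ∈ Te := ptcov_mem hTe hcov
      have hf : ((w' : P), (u : P)) ∈ Te := ptcov_mem hTe hcov'
      have hnef : (⟨((w : P), (u : P)), he⟩ : ↥Te) ≠ ⟨((w' : P), (u : P)), hf⟩ := by
        intro hcon
        exact hww (Subtype.ext (congrArg (fun x : ↥Te => x.val.1) hcon))
      obtain ⟨g, hg, hg1⟩ := lemA' Tv Te hne htree hlc ⟨_, he⟩ ⟨_, hf⟩ hnef rfl
      have hg' : (((u : P), g.2) : P × P) ∈ Te := by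
        rw [show (((u : P), g.2) : P × P) = g from Prod.ext hg1.symm rfl]; exact hg
      have hle2 : (u : P) ≤ g.2 := (hTe _ hg').1.le
      obtain ⟨-, hr⟩ := hstep ⟨((w : P), (u : P)), he⟩ ⟨((u : P), g.2), hg'⟩ rfl h hle2
      obtain ⟨-, hr'⟩ := hstep ⟨((w' : P), (u : P)), hf⟩ ⟨((u : P), g.2), hg'⟩ rfl h' hle2
      have h3 := hr.symm.trans hr'
      exact Submodule.map_injective_of_injective (α ⟨((u : P), g.2), hg'⟩).injective h3
  · -- all kernels resp. ranges isomorphic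
    intro u v s t hcov hcov' h h'
    have he : ((u : P), (v : P)) ∈ Te := ptcov_mem hTe hcov
    have hf : ((s : P), (t : P)) ∈ Te := ptcov_mem hTe hcov'
    set dk : ↥Te → ℕ :=
      fun g => Module.finrank k (LinearMap.ker (M.map (hTe g.1 g.2).1.le)) with hdk
    set dr : ↥Te → ℕ :=
      fun g => Module.finrank k (LinearMap.range (M.map (hTe g.1 g.2).1.le)) with hdr
    have hadjinv : ∀ a b : ↥Te, (a : P × P).2 = (b : P × P).1 → dk a = dk b ∧ dr a = dr b := by
      intro a b hc
      have h1 : (a : P × P).1 ≤ (b : P × P).1 := le_of_le_of_eq (hTe a.1 a.2).1.le hc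
      have h2 : (a : P × P).2 ≤ (b : P × P).2 := le_of_eq_of_le hc (hTe b.1 b.2).1.le
      obtain ⟨hk, hr⟩ := hstep a b hc h1 h2
      constructor
      · calc dk a = Module.finrank k (LinearMap.ker (M.map h1)) :=
              (pmod_congr M rfl hc (hTe a.1 a.2).1.le h1).1
          _ = Module.finrank k
              (Submodule.comap (α a).toLinearMap (LinearMap.ker (M.map h2))) := by rw [hk]
          _ = Module.finrank k (LinearMap.ker (M.map h2)) := by
              rw [Submodule.comap_equiv_eq_map_symm]
              exact LinearEquiv.finrank_map_eq (α a).symm (LinearMap.ker (M.map h2))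
          _ = dk b := (pmod_congr M hc rfl h2 (hTe b.1 b.2).1.le).1
      · calc dr a = Module.finrank k (LinearMap.range (M.map h1)) :=
              (pmod_congr M rfl hc (hTe a.1 a.2).1.le h1).2
          _ = Module.finrank k
              (Submodule.map (α b).toLinearMap (LinearMap.range (M.map h1))) :=
              (LinearEquiv.finrank_map_eq (α b) (LinearMap.range (M.map h1))).symm
          _ = Module.finrank k (LinearMap.range (M.map h2)) := by rw [hr]
          _ = dr b := (pmod_congr M hc rfl h2 (hTe b.1 b.2).1.le).2
    have hreachinv : ∀ a b : ↥Te,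
        (SimpleGraph.fromRel (fun e f : ↥Te => (e : P × P).2 = (f : P × P).1)).Reachable a b →
        dk a = dk b ∧ dr a = dr b := by
      intro a b hr
      obtain ⟨w⟩ := hr
      induction w with
      | nil => exact ⟨rfl, rfl⟩
      | cons hA p ih =>
        rw [SimpleGraph.fromRel_adj] at hA
        rcases hA.2 with hc | hc
        · obtain ⟨hk1, hr1⟩ := hadjinv _ _ hc
          exact ⟨hk1.trans ih.1, hr1.trans ih.2⟩
        · obtain ⟨hk1, hr1⟩ := hadjinv _ _ hc
          exact ⟨hk1.symm.trans ih.1, hr1.symm.trans ih.2⟩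
    obtain ⟨hk, hr⟩ := hreachinv ⟨((u : P), (v : P)), he⟩ ⟨((s : P), (t : P)), hf⟩
      (hlc.preconnected _ _)
    constructor
    · exact FiniteDimensional.nonempty_linearEquiv_of_finrank_eq hk
    · exact FiniteDimensional.nonempty_linearEquiv_of_finrank_eq hr
end

section
/- Let G be a loop-free digraph (at most one directed edge between any ordered pair of distinct vertices, and no edges from a vertex to itself) that is acyclic (contains no directed cycle) and transitively reduced (for every directed edge (u,w) there is no directed path of length at least 2 from u to w). Then the line digraph of G — whose vertices are the directed edges of G, with a directed edge from (u,v) to (v,w) for every pair of consecutive edges — is also acyclic and transitively reduced. -/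
/-!
STATEMENT 13: If a loop-free digraph `G` is acyclic and transitively reduced, then so is its
line digraph.
-/

theorem statement13 (V : Type) (E : V → V → Prop)
    -- `G = (V, E)` is loop-free
    (hloop : ∀ v : V, ¬ E v v)
    -- `G` is acyclic: no directed cycle
    (hacyclic : ∀ v : V, ¬ Relation.TransGen E v v)
    -- `G` is transitively reduced: for every edge `(u,w)` there is no directed path of
    -- length at least 2 from `u` to `w`
    (hred : ∀ u w : V, E u w → ¬ ∃ z : V, E u z ∧ Relation.TransGen E z w) :
    -- the line digraph of `G` (vertices: edges of `G`; edge relation: consecutiveness)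
    -- is acyclic ...
    (∀ e : {e : V × V // E e.1 e.2},
      ¬ Relation.TransGen (fun a b : {e : V × V // E e.1 e.2} => (a : V × V).2 = (b : V × V).1) e e) ∧
    -- ... and transitively reduced
    (∀ e f : {e : V × V // E e.1 e.2},
      (e : V × V).2 = (f : V × V).1 →
      ¬ ∃ g : {e : V × V // E e.1 e.2},
          (e : V × V).2 = (g : V × V).1 ∧
          Relation.TransGen (fun a b : {e : V × V // E e.1 e.2} => (a : V × V).2 = (b : V × V).1) g f) := by
  -- key: a transitive chain in the line digraph from `a` to `b` yields a (possibly empty)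
  -- directed path in `G` from `a.2` to `b.1`.
  have key : ∀ a b : {e : V × V // E e.1 e.2},
      Relation.TransGen (fun a b : {e : V × V // E e.1 e.2} => (a : V × V).2 = (b : V × V).1) a b →
      Relation.ReflTransGen E (a : V × V).2 (b : V × V).1 := by
    intro a b h
    induction h with
    | single h => rw [h]
    | tail _ h2 ih =>
        rename_i c d _
        have : Relation.ReflTransGen E (a : V × V).2 (c : V × V).2 :=
          ih.tail c.2
        rwa [h2] at this
  constructor
  · intro e he
    have h1 := key e e he
    rcases (Relation.reflTransGen_iff_eq_or_transGen.mp h1) with h | h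
    · exact hloop _ (h ▸ e.2)
    · exact hacyclic _ (h.head e.2)
  · rintro e f hef ⟨g, heg, hgf⟩
    have h1 := key g f hgf
    -- g.1 = e.2 = f.1, and E g.1 g.2, path g.2 →* f.1
    have hE : E (f : V × V).1 (g : V × V).2 := by
      have := g.2
      rwa [← heg, hef] at this
    rcases (Relation.reflTransGen_iff_eq_or_transGen.mp h1) with h | h
    · exact hloop _ (h ▸ hE)
    · exact hacyclic _ (h.head hE)
end

section
/- Let P be a finite poset and M a kP-module. Define kP̂-modules K_M and C_M by K_M(u,v) = ker(M(u ≤ v) : M(u) → M(v)) and C_M(u,v) = coker(M(u ≤ v) : M(u) → M(v)), where for a relation (u,v) ≤ (x,y) in P̂ the map K_M((u,v) ≤ (x,y)) is the restriction of M(u ≤ x) (which carries ker M(u ≤ v) into ker M(x ≤ y)) and C_M((u,v) ≤ (x,y)) is the map induced by M(v ≤ y) on the cokernels. Then K_M and C_M are virtually trivial: they send every non-identity morphism of P̂ to the zero map. -/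
lemma hatle_tgt_le_src {P : Type} [PartialOrder P] {e f : Cov P}
    (h : hatle e f) : e = f ∨ e.tgt ≤ f.src := by
  induction h using Relation.ReflTransGen.head_induction_on with
  | refl => exact Or.inl rfl
  | head hab _ ih =>
    rename_i a c _
    right
    rcases ih with rfl | hle
    · exact le_of_eq hab
    · exact hab.le.trans (c.cov.le.trans hle)

theorem statement15 (k : Type) [Field k] (P : Type) [Fintype P] [PartialOrder P]
    (M : PModule k P) :
    ∀ (e f : Cov P), hatle e f → e ≠ f →
      ∀ (h0 : e.src ≤ f.src) (h1 : e.tgt ≤ f.tgt),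
        -- the map `K_M(e ≤ f)`, i.e. the restriction of `M(e.src ≤ f.src)` to
        -- `ker M(e.src ≤ e.tgt)`, is zero (hence carries it into `ker M(f.src ≤ f.tgt)`)
        (∀ m ∈ LinearMap.ker (M.map e.cov.le), M.map h0 m = 0) ∧
        -- the map `C_M(e ≤ f)` induced by `M(e.tgt ≤ f.tgt)` on cokernels is zero, i.e.
        -- the image of `M(e.tgt ≤ f.tgt)` is contained in the image of `M(f.src ≤ f.tgt)`
        (∀ m : M.V e.tgt, M.map h1 m ∈ LinearMap.range (M.map f.cov.le)) := by
  intro e f hef hne h0 h1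
  rcases hatle_tgt_le_src hef with rfl | hle
  · exact absurd rfl hne
  constructor
  · intro m hm
    have : M.map h0 = (M.map hle).comp (M.map e.cov.le) := by
      rw [← M.map_comp]
    rw [this]
    simp [LinearMap.mem_ker.mp hm]
  · intro m
    have : M.map h1 = (M.map f.cov.le).comp (M.map hle) := by
      rw [← M.map_comp]
    rw [this]
    exact ⟨M.map hle m, rfl⟩
end

section
/- Let P be a finite poset, let T ⊆ H_P be a line connected subgraph that is a tree, let P_T be the sub-poset generated by T, and let M be a kP-module whose gradient vanishes on T (i.e. there is a natural isomorphism β*(M_T) ≅ φ*(M_T)). Fix a non-maximal element x₀ of P_T. Then there exist a family of isomorphisms α_{u,v} : M(u) → M(v) for u, v ∈ P_T satisfying α_{u,u} = id, α_{v,w} ∘ α_{u,v} = α_{u,w}, and α_{w,t} ∘ M(u ≤ w) = M(s ≤ t) ∘ α_{u,s} for all covering relations u ⋖ w, s ⋖ t in P_T, together with an endomorphism γ₀ of M(x₀), such that for every strict relation y < y′ in P_T one has M(y ≤ y′) = α_{x₀,y′} ∘ γ₀^m ∘ α_{y,x₀}, where m is the graph distance from y to y′ in T (the number of covering relations in the chain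 from y to y′ in T). -/
/- Auxiliary constructions: transporting the edge isomorphisms along walks in `T`. -/

section AuxDefs

variable {k P : Type} [Field k] [PartialOrder P] {Tv : Set P} {Te : Set (P × P)}

open Classical in
noncomputable def stepIso (M : PModule k P)
    (α0 : ∀ e : ↥Te, (M.V (e : P × P).1 ≃ₗ[k] M.V (e : P × P).2))
    (a b : ↥Tv) (h : ((a : P), (b : P)) ∈ Te ∨ ((b : P), (a : P)) ∈ Te) :
    M.V (a : P) ≃ₗ[k] M.V (b : P) :=
  if h1 : ((a : P), (b : P)) ∈ Te then α0 ⟨_, h1⟩ else (α0 ⟨_, h.resolve_left h1⟩).symm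

noncomputable def walkIso (M : PModule k P)
    (α0 : ∀ e : ↥Te, (M.V (e : P × P).1 ≃ₗ[k] M.V (e : P × P).2)) :
    ∀ {a b : ↥Tv},
      (SimpleGraph.fromRel (fun x y : ↥Tv => ((x : P), (y : P)) ∈ Te)).Walk a b →
      (M.V (a : P) ≃ₗ[k] M.V (b : P))
  | _, _, SimpleGraph.Walk.nil => LinearEquiv.refl _ _
  | _, _, SimpleGraph.Walk.cons h w => (stepIso M α0 _ _ h.2).trans (walkIso M α0 w)

@[simp] lemma walkIso_nil (M : PModule k P)
    (α0 : ∀ e : ↥Te, (M.V (e : P × P).1 ≃ₗ[k] M.V (e : P × P).2)) {a : ↥Tv} :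
    walkIso M α0 (SimpleGraph.Walk.nil (u := a)) = LinearEquiv.refl _ _ := rfl

@[simp] lemma walkIso_cons (M : PModule k P)
    (α0 : ∀ e : ↥Te, (M.V (e : P × P).1 ≃ₗ[k] M.V (e : P × P).2)) {a b c : ↥Tv}
    (h : (SimpleGraph.fromRel (fun x y : ↥Tv => ((x : P), (y : P)) ∈ Te)).Adj a b)
    (w : (SimpleGraph.fromRel (fun x y : ↥Tv => ((x : P), (y : P)) ∈ Te)).Walk b c) :
    walkIso M α0 (SimpleGraph.Walk.cons h w) = (stepIso M α0 _ _ h.2).trans (walkIso M α0 w) := rfl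

lemma walkIso_append (M : PModule k P)
    (α0 : ∀ e : ↥Te, (M.V (e : P × P).1 ≃ₗ[k] M.V (e : P × P).2)) {a b c : ↥Tv}
    (p : (SimpleGraph.fromRel (fun x y : ↥Tv => ((x : P), (y : P)) ∈ Te)).Walk a b)
    (q : (SimpleGraph.fromRel (fun x y : ↥Tv => ((x : P), (y : P)) ∈ Te)).Walk b c) :
    walkIso M α0 (p.append q) = (walkIso M α0 p).trans (walkIso M α0 q) := by
  induction p with
  | nil => refine LinearEquiv.ext fun x => ?_; simp
  | cons h p ih => refine LinearEquiv.ext fun x => ?_; simp [ih]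

noncomputable def gFun {k P : Type} [Field k] [PartialOrder P] {Tv : Set P} {Te : Set (P × P)}
    (M : PModule k P) (hTe : ∀ e ∈ Te, (e.1 ⋖ e.2) ∧ e.1 ∈ Tv ∧ e.2 ∈ Tv) (x₀ : ↥Tv)
    (A : ∀ v : ↥Tv, (M.V (x₀ : P) ≃ₗ[k] M.V (v : P))) (e : ↥Te) :
    Module.End k (M.V (x₀ : P)) :=
  (A ⟨(e : P × P).2, (hTe e.val e.prop).2.2⟩).symm.toLinearMap ∘ₗ
    (M.map (hTe e.val e.prop).1.le ∘ₗ
      (A ⟨(e : P × P).1, (hTe e.val e.prop).2.1⟩).toLinearMap)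

end AuxDefs

theorem statement17 (k : Type) [Field k] (P : Type) [Fintype P] [PartialOrder P]
    (Tv : Set P) (Te : Set (P × P))
    -- `T` is a subgraph of the Hasse diagram `H_P`, with vertex set `Tv` and edge set `Te`
    (hTe : ∀ e ∈ Te, (e.1 ⋖ e.2) ∧ e.1 ∈ Tv ∧ e.2 ∈ Tv)
    -- `T` is a tree: its underlying undirected graph is connected and acyclic
    (htree : (SimpleGraph.fromRel (fun a b : ↥Tv => ((a : P), (b : P)) ∈ Te)).IsTree)
    -- `T` is line connected: the line digraph of `T` is connected as an undirected graph
    (hlc : (SimpleGraph.fromRel (fun e f : ↥Te => (e : P × P).2 = (f : P × P).1)).Connected)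
    (M : PModule k P)
    -- the gradient of `M` vanishes on `T`: a natural isomorphism `β*(M_T) ≅ φ*(M_T)`
    (hgrad : ∃ α : ∀ e : ↥Te, (M.V (e : P × P).1 ≃ₗ[k] M.V (e : P × P).2),
      ∀ (e f : ↥Te), tline Te e f →
        ∀ (h1 : (e : P × P).1 ≤ (f : P × P).1) (h2 : (e : P × P).2 ≤ (f : P × P).2),
          (α f).toLinearMap.comp (M.map h1) = (M.map h2).comp (α e).toLinearMap)
    -- a fixed non-maximal element `x₀` of `P_T`
    (x₀ : ↥Tv) (hx₀ : ∃ z : ↥Tv, ptlt Tv Te x₀ z) :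
    ∃ (α : ∀ u v : ↥Tv, (M.V (u : P) ≃ₗ[k] M.V (v : P)))
      (γ₀ : Module.End k (M.V (x₀ : P))),
      (∀ u : ↥Tv, α u u = LinearEquiv.refl k (M.V (u : P))) ∧
      (∀ u v w : ↥Tv, (α u v).trans (α v w) = α u w) ∧
      (∀ u w s t : ↥Tv, ptcov Tv Te u w → ptcov Tv Te s t →
        ∀ (h1 : (u : P) ≤ (w : P)) (h2 : (s : P) ≤ (t : P)),
          (α w t).toLinearMap.comp (M.map h1) = (M.map h2).comp ((α u s).toLinearMap)) ∧
      -- for `y < y′` in `P_T` at graph distance `m` in `T` (witnessed by the chain of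
      -- consecutive edges of `T` from `y` to `y′`, a list of `m + 1` vertices):
      (∀ (y y' : ↥Tv), ptlt Tv Te y y' → ∀ (m : ℕ) (l : List ↥Tv),
        l.Chain' (fun a b : ↥Tv => ((a : P), (b : P)) ∈ Te) →
        l.head? = some y → l.getLast? = some y' → l.length = m + 1 →
        ∀ (h : (y : P) ≤ (y' : P)),
          M.map h = ((α x₀ y').toLinearMap.comp
            ((γ₀ ^ m : Module.End k (M.V (x₀ : P))).comp ((α y x₀).toLinearMap)))) := by
  classical
  obtain ⟨α0, hα0⟩ := hgrad
  -- ptle implies ≤ in P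
  have hPle : ∀ a b : ↥Tv, ptle Tv Te a b → (a : P) ≤ (b : P) := by
    intro a b h
    induction h with
    | refl => exact le_refl _
    | tail _ h2 ih => exact ih.trans (hTe _ h2).1.le
  -- the family of isomorphisms A v : M(x₀) ≅ M(v)
  obtain ⟨A, hA0, hAe⟩ :
      ∃ A : ∀ v : ↥Tv, (M.V (x₀ : P) ≃ₗ[k] M.V (v : P)),
        A x₀ = LinearEquiv.refl k _ ∧
        ∀ (a b : P) (he : (a, b) ∈ Te) (ha : a ∈ Tv) (hb : b ∈ Tv),
          A ⟨b, hb⟩ = (A ⟨a, ha⟩).trans (α0 ⟨(a, b), he⟩) := by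
    refine ⟨fun v => walkIso M α0 (htree.existsUnique_path x₀ v).choose, ?_, ?_⟩
    · have hnil : (htree.existsUnique_path x₀ x₀).choose = SimpleGraph.Walk.nil :=
        ((htree.existsUnique_path x₀ x₀).choose_spec.2 SimpleGraph.Walk.nil
          SimpleGraph.Walk.IsPath.nil).symm
      show walkIso M α0 (htree.existsUnique_path x₀ x₀).choose = LinearEquiv.refl k (M.V (x₀ : P))
      rw [hnil]; rfl
    · intro a b he ha hb
      set u : ↥Tv := ⟨a, ha⟩ with hu
      set v : ↥Tv := ⟨b, hb⟩ with hv
      have hcov := (hTe (a, b) he).1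
      have hadj : (SimpleGraph.fromRel
          (fun x y : ↥Tv => ((x : P), (y : P)) ∈ Te)).Adj u v := by
        rw [SimpleGraph.fromRel_adj]
        exact ⟨by simp [hu, hv, Subtype.ext_iff]; exact hcov.ne, Or.inl he⟩
      have hba : ((b : P), (a : P)) ∉ Te := fun hc => lt_asymm hcov.lt (hTe _ hc).1.lt
      set p := (htree.existsUnique_path x₀ u).choose with hpdef
      have hpPath : p.IsPath := (htree.existsUnique_path x₀ u).choose_spec.1
      by_cases hvp : v ∈ p.support
      · have h1 : (htree.existsUnique_path x₀ v).choose = p.takeUntil v hvp :=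
          ((htree.existsUnique_path x₀ v).choose_spec.2 _ (hpPath.takeUntil hvp)).symm
        have hconsPath : (SimpleGraph.Walk.cons hadj.symm SimpleGraph.Walk.nil).IsPath := by
          simp [SimpleGraph.Walk.cons_isPath_iff, hadj.ne']
        have h2 : p.dropUntil v hvp = SimpleGraph.Walk.cons hadj.symm SimpleGraph.Walk.nil := by
          have := htree.IsAcyclic.path_unique
            ⟨p.dropUntil v hvp, hpPath.dropUntil hvp⟩
            ⟨SimpleGraph.Walk.cons hadj.symm SimpleGraph.Walk.nil, hconsPath⟩
          exact Subtype.ext_iff.mp this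
        have h3 : p = ((p.takeUntil v hvp).append
            (SimpleGraph.Walk.cons hadj.symm SimpleGraph.Walk.nil)) := by
          rw [← h2, SimpleGraph.Walk.take_spec]
        have hstep : stepIso M α0 v u (Or.inr he) = (α0 ⟨(a, b), he⟩).symm := by
          rw [stepIso, dif_neg hba]
        refine LinearEquiv.ext fun x => ?_
        beta_reduce
        rw [h1]
        have h4 := congrArg (walkIso M α0) h3
        rw [walkIso_append] at h4
        have h5 : walkIso M α0 (SimpleGraph.Walk.cons hadj.symm SimpleGraph.Walk.nil)
            = (α0 ⟨(a, b), he⟩).symm.trans (LinearEquiv.refl k _) := by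
          rw [walkIso_cons]
          congr 1
        rw [h5] at h4
        rw [← hpdef, h4]
        simp
      · have hq : (p.concat hadj).IsPath := by
          rw [← SimpleGraph.Walk.isPath_reverse_iff, SimpleGraph.Walk.reverse_concat]
          exact hpPath.reverse.cons (by simpa [SimpleGraph.Walk.support_reverse] using hvp)
        have h1 : (htree.existsUnique_path x₀ v).choose = p.concat hadj :=
          ((htree.existsUnique_path x₀ v).choose_spec.2 _ hq).symm
        have hstep : stepIso M α0 u v (Or.inl he) = α0 ⟨(a, b), he⟩ := by
          rw [stepIso, dif_pos he]
        refine LinearEquiv.ext fun x => ?_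
        beta_reduce
        rw [h1, SimpleGraph.Walk.concat_eq_append, walkIso_append]
        have h5 : walkIso M α0 (SimpleGraph.Walk.cons hadj SimpleGraph.Walk.nil)
            = (α0 ⟨(a, b), he⟩).trans (LinearEquiv.refl k _) := by
          rw [walkIso_cons]
          congr 1
        rw [h5, ← hpdef]
        simp
  -- γ₀ and the edge formula
  obtain ⟨γ₀, hγ₀⟩ :
      ∃ γ₀ : Module.End k (M.V (x₀ : P)),
        ∀ (a b : P) (he : (a, b) ∈ Te) (ha : a ∈ Tv) (hb : b ∈ Tv) (h : a ≤ b),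
          M.map h = ((A ⟨b, hb⟩).toLinearMap.comp
            (γ₀.comp ((A ⟨a, ha⟩).symm.toLinearMap))) := by
    have key : ∀ (g h : ↥Te), (g : P × P).2 = (h : P × P).1 →
        gFun M hTe x₀ A g = gFun M hTe x₀ A h := by
      rintro ⟨⟨a, b⟩, hg⟩ ⟨⟨b2, c⟩, hh⟩ hef
      dsimp at hef
      subst hef
      have hab : a ≤ b := (hTe _ hg).1.le
      have hbc : b ≤ c := (hTe _ hh).1.le
      have hnat := hα0 ⟨(a, b), hg⟩ ⟨(b, c), hh⟩ (Relation.ReflTransGen.single rfl) hab hbc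
      refine LinearMap.ext fun x => ?_
      simp only [gFun, LinearMap.comp_apply, LinearEquiv.coe_coe]
      simp only [hAe a b hg (hTe (a, b) hg).2.1 (hTe (a, b) hg).2.2,
        hAe b c hh (hTe (a, b) hg).2.2 (hTe (b, c) hh).2.2,
        LinearEquiv.trans_apply, LinearEquiv.symm_trans_apply]
      have hpt := LinearMap.congr_fun hnat ((A ⟨a, (hTe (a, b) hg).2.1⟩) x)
      simp only [LinearMap.comp_apply, LinearEquiv.coe_coe] at hpt
      rw [← hpt]
      simp
    have hconst : ∀ g h : ↥Te, gFun M hTe x₀ A g = gFun M hTe x₀ A h := by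
      intro g h
      refine (hlc.preconnected g h).elim fun w => ?_
      induction w with
      | nil => rfl
      | cons ha _ ih =>
        rcases ((SimpleGraph.fromRel_adj _ _ _).mp ha).2 with h1 | h1
        · exact (key _ _ h1).trans ih
        · exact ((key _ _ h1).symm).trans ih
    obtain ⟨z, hz⟩ := hx₀
    rcases hz.1.cases_head with heq | ⟨c, hc1, -⟩
    · exact (hz.2 (by rw [← heq]; exact Relation.ReflTransGen.refl)).elim
    refine ⟨gFun M hTe x₀ A ⟨((x₀ : P), (c : P)), hc1⟩, ?_⟩
    intro a b he ha hb h
    have hc := hconst ⟨(a, b), he⟩ ⟨((x₀ : P), (c : P)), hc1⟩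
    rw [← hc]
    refine LinearMap.ext fun x => ?_
    simp only [gFun, LinearMap.comp_apply, LinearEquiv.coe_coe]
    simp [LinearEquiv.apply_symm_apply]
  refine ⟨fun u v => (A u).symm.trans (A v), γ₀, ?_, ?_, ?_, ?_⟩
  · intro u; exact LinearEquiv.ext fun x => by simp
  · intro u v w; exact LinearEquiv.ext fun x => by simp
  · -- covering relations of P_T are edges of T
    have hcove : ∀ u w : ↥Tv, ptcov Tv Te u w → ((u : P), (w : P)) ∈ Te := by
      intro u w hcov
      obtain ⟨⟨hle', hnle⟩, hforall⟩ := hcov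
      rcases hle'.cases_head with heq | ⟨c, hc1, hc2⟩
      · exact absurd (heq ▸ Relation.ReflTransGen.refl) hnle
      · by_cases hcw : c = w
        · exact hcw ▸ hc1
        · have hltuc : ptlt Tv Te u c := by
            refine ⟨Relation.ReflTransGen.single hc1, fun hcu => ?_⟩
            exact (hTe _ hc1).1.lt.not_ge (hPle c u hcu)
          have hltcw : ptlt Tv Te c w := by
            refine ⟨hc2, fun hwc => ?_⟩
            have h1 : (c : P) ≤ (w : P) := hPle c w hc2
            have h2 : (w : P) ≤ (c : P) := hPle w c hwc
            exact hcw (Subtype.ext (le_antisymm h1 h2))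
          exact absurd hltcw (hforall c hltuc)
    intro u w s t h1 h2 hle1 hle2
    have e1 := hcove u w h1
    have e2 := hcove s t h2
    refine LinearMap.ext fun x => ?_
    simp only [LinearMap.comp_apply, LinearEquiv.coe_coe, LinearEquiv.trans_apply]
    rw [hγ₀ _ _ e1 u.2 w.2 hle1, hγ₀ _ _ e2 s.2 t.2 hle2]
    simp
  · -- main formula along chains
    have hle2 : ∀ (l : List ↥Tv), l.Chain' (fun a b : ↥Tv => ((a : P), (b : P)) ∈ Te) →
        ∀ y y' : ↥Tv, l.head? = some y → l.getLast? = some y' → (y : P) ≤ (y' : P) := by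
      intro l
      induction l with
      | nil => intro _ y y' h; simp at h
      | cons a t ih =>
        intro hch y y' hh hl
        have hy : y = a := by simpa using hh.symm
        subst hy
        cases t with
        | nil =>
          have : y' = y := by simpa using hl.symm
          subst this; exact le_refl _
        | cons b t' =>
          have hab := (List.isChain_cons_cons.mp hch).1
          have hch' := (List.isChain_cons_cons.mp hch).2
          have hl' : (b :: t').getLast? = some y' := by
            rwa [List.getLast?_cons_cons] at hl
          exact (hTe _ hab).1.le.trans (ih hch' b y' rfl hl')
    have hchain : ∀ (l : List ↥Tv), l.Chain' (fun a b : ↥Tv => ((a : P), (b : P)) ∈ Te) →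
        ∀ y y' : ↥Tv, l.head? = some y → l.getLast? = some y' →
        ∀ (h : (y : P) ≤ (y' : P)),
          M.map h = ((A y').toLinearMap.comp
            (((γ₀ ^ (l.length - 1)) : Module.End k (M.V (x₀ : P))).comp
              ((A y).symm.toLinearMap))) := by
      intro l
      induction l with
      | nil => intro _ y y' h; simp at h
      | cons a t ih =>
        intro hch y y' hh hl h
        have hy : y = a := by simpa using hh.symm
        subst hy
        cases t with
        | nil =>
          have hy' : y' = y := by simpa using hl.symm
          subst hy'
          have hid : M.map h = LinearMap.id := M.map_id (y' : P)
          rw [hid]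
          refine LinearMap.ext fun x => ?_
          simp
        | cons b t' =>
          have hab := (List.isChain_cons_cons.mp hch).1
          have hch' := (List.isChain_cons_cons.mp hch).2
          have hl' : (b :: t').getLast? = some y' := by
            rwa [List.getLast?_cons_cons] at hl
          have hble : (b : P) ≤ (y' : P) := hle2 (b :: t') hch' b y' rfl hl'
          have ihb := ih hch' b y' rfl hl' hble
          have hcomp : M.map h = (M.map hble).comp (M.map (hTe _ hab).1.le) :=
            M.map_comp (hTe _ hab).1.le hble
          rw [hcomp, ihb, hγ₀ _ _ hab y.2 b.2 (hTe _ hab).1.le]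
          refine LinearMap.ext fun x => ?_
          have hlen : (b :: t').length - 1 + 1 = (y :: b :: t').length - 1 := by
            simp
          rw [← hlen, pow_succ]
          simp [Module.End.mul_apply]
    intro y y' _ m l hch hh hl hlen h
    have hm : l.length - 1 = m := by omega
    have := hchain l hch y y' hh hl h
    rw [hm] at this
    rw [this]
    refine LinearMap.ext fun x => ?_
    simp [hA0]
end

section
/- Let P be a finite poset and M a kP-module. Then in the abelian category of kP-modules (functors from P to finite-dimensional k-vector spaces), M admits a projective resolution of finite length: there exists an exact sequence 0 → Q_n → ⋯ → Q_1 → Q_0 → M → 0 in which every Q_i is a projective object, and n can be taken at most the length of the longest chain in P (the maximal number of strict inequalities x_0 < x_1 < ⋯ < x_n in P). -/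
open CategoryTheory Limits

universe v

namespace S19
noncomputable section
open Classical

variable {k : Type} [Field k] {P : Type} [Fintype P] [PartialOrder P]

abbrev Cov (N : P ⥤ FGModuleCat.{v} k) (y : P) : Type v := ∀ x : P, PLift (x ≤ y) → N.obj x

def covMapL (N : P ⥤ FGModuleCat.{v} k) {y y' : P} (_f : y ≤ y') :
    Cov N y →ₗ[k] Cov N y' where
  toFun g := fun x _ => if h : x ≤ y then g x ⟨h⟩ else 0
  map_add' g₁ g₂ := by funext x h'; by_cases h : x ≤ y <;> simp [h]
  map_smul' c g := by funext x h'; by_cases h : x ≤ y <;> simp [h]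

omit [Fintype P] in
lemma covMapL_id (N : P ⥤ FGModuleCat.{v} k) (y : P) :
    covMapL N (le_refl y) = LinearMap.id (M := Cov N y) := by
  refine LinearMap.ext fun g => ?_
  funext x h'
  simp [covMapL, h'.down]

omit [Fintype P] in
lemma covMapL_comp (N : P ⥤ FGModuleCat.{v} k) {y y' y'' : P} (f : y ≤ y') (f' : y' ≤ y'') :
    covMapL N f' ∘ₗ covMapL N f = covMapL N (f.trans f') := by
  refine LinearMap.ext fun g => ?_
  funext x h''
  by_cases h : x ≤ y
  · simp [covMapL, h, h.trans f]
  · simp [covMapL, h]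

def cover (N : P ⥤ FGModuleCat.{v} k) : P ⥤ FGModuleCat.{v} k where
  obj y := FGModuleCat.of k (Cov N y)
  map {y y'} f := FGModuleCat.ofHom (covMapL N f.le)
  map_id y := FGModuleCat.hom_ext (covMapL_id N y)
  map_comp {y y' y''} f f' := FGModuleCat.hom_ext (covMapL_comp N f.le f'.le).symm

/-- the generator insertion at `y` -/
def deltaL (N : P ⥤ FGModuleCat.{v} k) (y : P) : N.obj y →ₗ[k] Cov N y where
  toFun m := fun x _ => if hx : x = y then N.map (homOfLE hx.ge) m else 0
  map_add' m₁ m₂ := by funext x h; by_cases hx : x = y <;> simp [hx]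
  map_smul' c m := by funext x h; by_cases hx : x = y <;> simp [hx]

/-- the general lifting construction out of a cover -/
def covLiftL (N E : P ⥤ FGModuleCat.{v} k) (ψ : ∀ x : P, N.obj x →ₗ[k] E.obj x) (y : P) :
    Cov N y →ₗ[k] E.obj y where
  toFun g := ∑ x : P, if h : x ≤ y then E.map (homOfLE h) (ψ x (g x ⟨h⟩)) else 0
  map_add' g₁ g₂ := by
    rw [← Finset.sum_add_distrib]
    refine Finset.sum_congr rfl fun x _ => ?_
    by_cases h : x ≤ y <;> simp [h]
  map_smul' c g := by
    rw [RingHom.id_apply, Finset.smul_sum]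
    refine Finset.sum_congr rfl fun x _ => ?_
    by_cases h : x ≤ y <;> simp [h]

def covLift (N E : P ⥤ FGModuleCat.{v} k) (ψ : ∀ x : P, N.obj x →ₗ[k] E.obj x) :
    cover N ⟶ E where
  app y := ConcreteCategory.ofHom (C := FGModuleCat.{v} k) (covLiftL N E ψ y)
  naturality y y' f := by
    refine FGModuleCat.hom_ext (LinearMap.ext fun g => ?_)
    show covLiftL N E ψ y' (covMapL N f.le g) = E.map f (covLiftL N E ψ y g)
    simp only [covLiftL, covMapL, LinearMap.coe_mk, AddHom.coe_mk, map_sum]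
    refine Finset.sum_congr rfl fun x _ => ?_
    by_cases h : x ≤ y
    · have h' : x ≤ y' := h.trans f.le
      simp only [h, h', dif_pos]
      have e : homOfLE h ≫ f = homOfLE h' := Subsingleton.elim _ _
      rw [← e, E.map_comp]
      rfl
    · simp only [h, dif_neg, not_false_iff]
      by_cases h' : x ≤ y' <;> simp [h']

lemma covLift_app (N E : P ⥤ FGModuleCat.{v} k) (ψ : ∀ x : P, N.obj x →ₗ[k] E.obj x)
    (y : P) (g : Cov N y) :
    (covLift N E ψ).app y g
      = ∑ x : P, if h : x ≤ y then E.map (homOfLE h) (ψ x (g x ⟨h⟩)) else 0 := rfl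

def eps (N : P ⥤ FGModuleCat.{v} k) : cover N ⟶ N :=
  covLift N N (fun _ => LinearMap.id)

/-- composing a lift with a natural transformation -/
lemma covLift_comp (N E X : P ⥤ FGModuleCat.{v} k) (ψ : ∀ x : P, N.obj x →ₗ[k] E.obj x)
    (t : E ⟶ X) :
    covLift N E ψ ≫ t = covLift N X (fun x => (t.app x).hom.hom ∘ₗ ψ x) := by
  refine NatTrans.ext (funext fun y => FGModuleCat.hom_ext (LinearMap.ext fun g => ?_))
  show t.app y (covLiftL N E ψ y g)
      = covLiftL N X (fun x => (t.app x).hom.hom ∘ₗ ψ x) y g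
  simp only [covLiftL, LinearMap.coe_mk, AddHom.coe_mk, map_sum]
  refine Finset.sum_congr rfl fun x _ => ?_
  by_cases h : x ≤ y
  · simp only [h, dif_pos]
    show t.app y (E.map (homOfLE h) _) = X.map (homOfLE h) (t.app x _)
    have := t.naturality (homOfLE h)
    calc t.app y (E.map (homOfLE h) (ψ x (g x ⟨h⟩)))
        = (E.map (homOfLE h) ≫ t.app y) (ψ x (g x ⟨h⟩)) := rfl
      _ = (t.app x ≫ X.map (homOfLE h)) (ψ x (g x ⟨h⟩)) := by rw [this]
      _ = _ := rfl
  · simp [h]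

/-- reconstruction: every map out of a cover is a lift -/
lemma covLift_delta (N X : P ⥤ FGModuleCat.{v} k) (f : cover N ⟶ X) :
    covLift N X (fun x => (f.app x).hom.hom ∘ₗ deltaL N x) = f := by
  refine NatTrans.ext (funext fun y => FGModuleCat.hom_ext (LinearMap.ext fun g => ?_))
  show covLiftL N X (fun x => (f.app x).hom.hom ∘ₗ deltaL N x) y g
      = f.app y g
  simp only [covLiftL, LinearMap.coe_mk, AddHom.coe_mk]
  have key : ∑ x : P, (if h : x ≤ y then
      (cover N).map (homOfLE h) (deltaL N x (g x ⟨h⟩)) else 0) = g := by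
    funext x' h'
    show (∑ x : P, (if h : x ≤ y then (covMapL N h (deltaL N x (g x ⟨h⟩)) : Cov N y) else 0)) x' h' = g x' h'
    rw [Finset.sum_apply, Finset.sum_apply]
    rw [Finset.sum_eq_single x']
    · simp only [h'.down, dif_pos]
      show (covMapL N h'.down (deltaL N x' (g x' ⟨h'.down⟩))) x' h' = g x' h'
      simp only [covMapL, deltaL, LinearMap.coe_mk, AddHom.coe_mk, le_refl, dif_pos]
      rw [Subsingleton.elim (homOfLE _ : x' ⟶ x') (𝟙 x'), N.map_id]
      rfl
    · intro b _ hb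
      by_cases h : b ≤ y
      · simp only [h, dif_pos]
        show (covMapL N h (deltaL N b (g b ⟨h⟩))) x' h' = 0
        by_cases hxb : x' ≤ b
        · simp only [covMapL, deltaL, LinearMap.coe_mk, AddHom.coe_mk, hxb, dif_pos]
          rw [dif_neg (fun hh : x' = b => hb hh.symm)]
        · simp [covMapL, hxb]
      · simp only [h, dif_neg, not_false_iff]
        rfl
    · intro hx'; exact absurd (Finset.mem_univ x') hx'
  calc ∑ x : P, (if h : x ≤ y then X.map (homOfLE h)
          (((f.app x).hom.hom ∘ₗ deltaL N x) (g x ⟨h⟩)) else 0)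
      = ∑ x : P, (if h : x ≤ y then
          f.app y ((cover N).map (homOfLE h) (deltaL N x (g x ⟨h⟩))) else 0) := by
        refine Finset.sum_congr rfl fun x _ => ?_
        by_cases h : x ≤ y
        · simp only [h, dif_pos]
          have := f.naturality (homOfLE h)
          calc X.map (homOfLE h) (((f.app x).hom.hom ∘ₗ deltaL N x) (g x ⟨h⟩))
              = (f.app x ≫ X.map (homOfLE h)) (deltaL N x (g x ⟨h⟩)) := rfl
            _ = ((cover N).map (homOfLE h) ≫ f.app y) (deltaL N x (g x ⟨h⟩)) := by rw [this]
            _ = _ := rfl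
        · simp [h]
    _ = f.app y (∑ x : P, if h : x ≤ y then
          (cover N).map (homOfLE h) (deltaL N x (g x ⟨h⟩)) else 0) := by
        rw [map_sum]
        refine Finset.sum_congr rfl fun x _ => ?_
        by_cases h : x ≤ y <;> simp [h]
    _ = f.app y g := by rw [key]

lemma eps_surjective (N : P ⥤ FGModuleCat.{v} k) (y : P) :
    Function.Surjective ((eps N).app y).hom.hom := by
  intro m
  refine ⟨deltaL N y m, ?_⟩
  show covLiftL N N (fun _ => LinearMap.id) y (deltaL N y m) = m
  simp only [covLiftL, LinearMap.coe_mk, AddHom.coe_mk]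
  rw [Finset.sum_eq_single y]
  · simp only [le_refl, dif_pos, LinearMap.id_coe, id_eq]
    show N.map _ (deltaL N y m y ⟨le_refl y⟩) = m
    simp only [deltaL, LinearMap.coe_mk, AddHom.coe_mk, dif_pos rfl]
    rw [Subsingleton.elim (homOfLE _ : y ⟶ y) (𝟙 y), N.map_id]
    show N.map _ m = m
    rw [Subsingleton.elim (homOfLE _ : y ⟶ y) (𝟙 y), N.map_id]
    rfl
  · intro b _ hb
    by_cases h : b ≤ y
    · simp only [h, dif_pos, LinearMap.id_coe, id_eq]
      show N.map (homOfLE h) (deltaL N y m b ⟨h⟩) = 0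
      simp only [deltaL, LinearMap.coe_mk, AddHom.coe_mk]
      rw [dif_neg hb, map_zero]
    · simp [h]
  · intro hy; exact absurd (Finset.mem_univ y) hy

/-- the coinduced functor at `y` with fiber `W` -/
def coind (W : Type v) [AddCommGroup W] [Module k W] [Module.Finite k W] (y : P) :
    P ⥤ FGModuleCat.{v} k where
  obj z := FGModuleCat.of k (PLift (z ≤ y) → W)
  map {z z'} f :=
    FGModuleCat.ofHom <|
    { toFun := fun g h' => g ⟨f.le.trans h'.down⟩
      map_add' := fun a b => rfl
      map_smul' := fun c a => rfl }
  map_id z := rfl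
  map_comp f f' := rfl

/-- any epi in the functor category is objectwise surjective -/
lemma epi_app_surjective {E X : P ⥤ FGModuleCat.{v} k} (e : E ⟶ X) [Epi e] (y : P) :
    Function.Surjective (e.app y).hom.hom := by
  set W := (X.obj y : Type v) ⧸ LinearMap.range (e.app y).hom.hom with hW
  let mk : X.obj y →ₗ[k] W := Submodule.mkQ _
  let φ : X ⟶ coind (k := k) W y :=
    { app := fun z => ConcreteCategory.ofHom (C := FGModuleCat.{v} k) <| LinearMap.pi (fun h' : PLift (z ≤ y) =>
        mk ∘ₗ (X.map (homOfLE h'.down)).hom.hom)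
      naturality := fun z z' f => by
        refine FGModuleCat.hom_ext (LinearMap.ext fun v => ?_)
        funext h'
        show mk (X.map (homOfLE h'.down) (X.map f v))
            = mk (X.map (homOfLE (f.le.trans h'.down)) v)
        congr 1
        calc X.map (homOfLE h'.down) (X.map f v)
            = (X.map f ≫ X.map (homOfLE h'.down)) v := rfl
          _ = X.map (f ≫ homOfLE h'.down) v := by rw [← X.map_comp]
          _ = X.map (homOfLE (f.le.trans h'.down)) v := by
              rw [Subsingleton.elim (f ≫ homOfLE h'.down) (homOfLE (f.le.trans h'.down))]
    }
  have hφ : e ≫ φ = 0 := by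
    refine NatTrans.ext (funext fun z => FGModuleCat.hom_ext (LinearMap.ext fun v => ?_))
    funext h'
    show mk (X.map (homOfLE h'.down) (e.app z v)) = (0 : E.obj z →ₗ[k] (coind (k:=k) W y).obj z) v h'
    have nat : X.map (homOfLE h'.down) (e.app z v) = e.app y (E.map (homOfLE h'.down) v) := by
      have := e.naturality (homOfLE h'.down)
      calc X.map (homOfLE h'.down) (e.app z v) = (e.app z ≫ X.map (homOfLE h'.down)) v := rfl
        _ = (E.map (homOfLE h'.down) ≫ e.app y) v := by rw [this]
        _ = _ := rfl
    rw [nat]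
    have : mk (e.app y (E.map (homOfLE h'.down) v)) = 0 := by
      rw [Submodule.mkQ_apply, Submodule.Quotient.mk_eq_zero]
      exact ⟨E.map (homOfLE h'.down) v, rfl⟩
    rw [this]
    rfl
  have hφ0 : φ = 0 := by
    have : e ≫ φ = e ≫ 0 := by rw [hφ, comp_zero]
    exact (cancel_epi e).mp this
  intro w
  have : φ.app y w ⟨le_refl y⟩ = 0 := by rw [hφ0]; rfl
  have h2 : mk (X.map (homOfLE (le_refl y)) w) = 0 := this
  rw [Subsingleton.elim (homOfLE (le_refl y)) (𝟙 y), X.map_id] at h2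
  have h3 : mk w = 0 := h2
  rw [Submodule.mkQ_apply, Submodule.Quotient.mk_eq_zero] at h3
  exact h3

instance cover_projective (N : P ⥤ FGModuleCat.{v} k) : Projective (cover N) where
  factors {E X} f e he := by
    have hs : ∀ x : P, ∃ s : X.obj x →ₗ[k] E.obj x,
        (e.app x).hom.hom ∘ₗ s = LinearMap.id :=
      fun x => (e.app x).hom.hom.exists_rightInverse_of_surjective
        (LinearMap.range_eq_top.2 (epi_app_surjective e x))
    choose s hsec using hs
    refine ⟨covLift N E (fun x => s x ∘ₗ ((f.app x).hom.hom ∘ₗ deltaL N x)), ?_⟩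
    rw [covLift_comp]
    have : (fun x => (e.app x).hom.hom ∘ₗ
        (s x ∘ₗ ((f.app x).hom.hom ∘ₗ deltaL N x)))
        = fun x => (f.app x).hom.hom ∘ₗ deltaL N x := by
      funext x
      rw [← LinearMap.comp_assoc, hsec, LinearMap.id_comp]
    rw [this, covLift_delta]

/-- kernel of a natural transformation, as a functor -/
def kerF {A N : P ⥤ FGModuleCat.{v} k} (τ : A ⟶ N) : P ⥤ FGModuleCat.{v} k where
  obj y := FGModuleCat.of k (LinearMap.ker (τ.app y).hom.hom)
  map {y y'} f := ConcreteCategory.ofHom (C := FGModuleCat.{v} k) <| (A.map f).hom.hom.restrict (fun a ha => by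
    show τ.app y' (A.map f a) = 0
    have : τ.app y' (A.map f a) = N.map f (τ.app y a) := by
      have := τ.naturality f
      calc τ.app y' (A.map f a) = (A.map f ≫ τ.app y') a := rfl
        _ = (τ.app y ≫ N.map f) a := by rw [this]
        _ = _ := rfl
    rw [this, show τ.app y a = 0 from ha, map_zero])
  map_id y := by
    refine FGModuleCat.hom_ext (LinearMap.ext fun a => Subtype.ext ?_)
    show A.map (𝟙 y) a.val = a.val
    rw [A.map_id]; rfl
  map_comp {y y' y''} f f' := by
    refine FGModuleCat.hom_ext (LinearMap.ext fun a => Subtype.ext ?_)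
    show A.map (f ≫ f') a.val = A.map f' (A.map f a.val)
    rw [A.map_comp]; rfl

/-- inclusion of the kernel functor -/
def kerIncl {A N : P ⥤ FGModuleCat.{v} k} (τ : A ⟶ N) : kerF τ ⟶ A where
  app y := ConcreteCategory.ofHom (C := FGModuleCat.{v} k) (LinearMap.ker (τ.app y).hom.hom).subtype
  naturality y y' f := FGModuleCat.hom_ext (LinearMap.ext fun a => rfl)

lemma range_kerIncl {A N : P ⥤ FGModuleCat.{v} k} (τ : A ⟶ N) (y : P) :
    LinearMap.range ((kerIncl τ).app y).hom.hom
      = LinearMap.ker (τ.app y).hom.hom :=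
  Submodule.range_subtype _

lemma comp_app_linear {A B C : P ⥤ FGModuleCat.{v} k} (α : A ⟶ B) (β : B ⟶ C) (y : P) :
    ((α ≫ β).app y).hom.hom
      = (β.app y).hom.hom ∘ₗ (α.app y).hom.hom := rfl

lemma range_d {N : P ⥤ FGModuleCat.{v} k} (y : P) :
    LinearMap.range ((eps (kerF (eps N)) ≫ kerIncl (eps N)).app y).hom.hom
      = LinearMap.ker ((eps N).app y).hom.hom := by
  rw [comp_app_linear, LinearMap.range_comp,
    LinearMap.range_eq_top.2 (eps_surjective (kerF (eps N)) y), Submodule.map_top,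
    range_kerIncl]

lemma ker_d {A N : P ⥤ FGModuleCat.{v} k} (τ : A ⟶ N) (y : P) :
    LinearMap.ker ((eps (kerF τ) ≫ kerIncl τ).app y).hom.hom
      = LinearMap.ker ((eps (kerF τ)).app y).hom.hom := by
  rw [comp_app_linear, LinearMap.ker_comp]
  have : LinearMap.ker ((kerIncl τ).app y).hom.hom = ⊥ :=
    Submodule.ker_subtype _
  rw [this, Submodule.comap_bot]

/-- zero objects from triviality -/
lemma isZero_of_triv (F : P ⥤ FGModuleCat.{v} k) (h : ∀ (y : P) (v : F.obj y), v = 0) :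
    IsZero F := by
  refine Functor.isZero F fun y => ?_
  constructor
  · intro Y
    refine ⟨⟨⟨0⟩, fun f => ?_⟩⟩
    refine FGModuleCat.hom_ext (LinearMap.ext fun v => ?_)
    rw [h y v, map_zero]
    rfl
  · intro Y
    refine ⟨⟨⟨0⟩, fun f => ?_⟩⟩
    refine FGModuleCat.hom_ext (LinearMap.ext fun v => ?_)
    exact (h y (f v)).trans rfl

/-- the height function -/
def ht : P → ℕ :=
  WellFounded.fix (wellFounded_lt (α := P))
    (fun y ih => (Finset.univ.filter (fun z => z < y)).attach.sup
      (fun z => ih z.1 (Finset.mem_filter.mp z.2).2 + 1))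

lemma ht_eq (y : P) :
    ht y = (Finset.univ.filter (fun z => z < y)).attach.sup (fun z => ht z.1 + 1) := by
  rw [ht, WellFounded.fix_eq]

lemma ht_lt_of_lt {x y : P} (hxy : x < y) : ht x < ht y := by
  rw [ht_eq y]
  have hx : x ∈ Finset.univ.filter (fun z => z < y) := by
    simp [hxy]
  have := Finset.le_sup (f := fun z : {z // z ∈ Finset.univ.filter (fun z => z < y)} => ht z.1 + 1)
    (Finset.mem_attach _ ⟨x, hx⟩)
  dsimp only at this
  omega

lemma exists_chain (y : P) : ∃ l : List P,
    l.Chain' (· < ·) ∧ l.length = ht y + 1 ∧ l.getLast? = some y := by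
  refine WellFounded.induction (wellFounded_lt (α := P))
    (C := fun y => ∃ l : List P,
      l.Chain' (· < ·) ∧ l.length = ht y + 1 ∧ l.getLast? = some y) y ?_
  intro y ih
  rcases (Finset.univ.filter (fun z => z < y)).attach.eq_empty_or_nonempty with he | hne
  · refine ⟨[y], List.isChain_singleton y, ?_, rfl⟩
    rw [ht_eq, he, Finset.sup_empty]
    rfl
  · obtain ⟨z, _, hz⟩ := Finset.exists_mem_eq_sup _ hne
      (fun z : {z // z ∈ Finset.univ.filter (fun w => w < y)} => ht z.1 + 1)
    have hzy : z.1 < y := (Finset.mem_filter.mp z.2).2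
    obtain ⟨l, hl, hlen, hlast⟩ := ih z.1 hzy
    refine ⟨l ++ [y], ?_, ?_, List.getLast?_concat⟩
    · unfold List.Chain'
      rw [List.isChain_append]
      refine ⟨hl, List.isChain_singleton y, ?_⟩
      intro a ha b hb
      rw [hlast] at ha
      simp only [List.head?_cons, Option.mem_some_iff] at ha hb
      rw [← ha, ← hb]
      exact hzy
    · rw [List.length_append, hlen, ht_eq y, hz]
      simp

/-- triviality propagates through kernels of augmentations, raising the height bound -/
lemma ker_eps_triv (N : P ⥤ FGModuleCat.{v} k) (i : ℕ)
    (hN : ∀ y : P, ht y < i → ∀ v : N.obj y, v = 0) :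
    ∀ y : P, ht y < i + 1 → ∀ v : (kerF (eps N)).obj y, v = 0 := by
  intro y hy v
  have hval : ∀ (x : P) (h : PLift (x ≤ y)), x ≠ y → (v.1 : Cov N y) x h = 0 := by
    intro x h hxy
    exact hN x (lt_of_lt_of_le (ht_lt_of_lt (lt_of_le_of_ne h.down hxy))
      (Nat.lt_succ_iff.mp hy)) _
  have h0 : (eps N).app y (v.1 : Cov N y) = 0 := v.2
  have hsum : (eps N).app y (v.1 : Cov N y) = (v.1 : Cov N y) y ⟨le_refl y⟩ := by
    show covLiftL N N (fun _ => LinearMap.id) y (v.1 : Cov N y) = _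
    simp only [covLiftL, LinearMap.coe_mk, AddHom.coe_mk]
    rw [Finset.sum_eq_single y]
    · simp only [le_refl, dif_pos, LinearMap.id_coe, id_eq]
      rw [Subsingleton.elim (homOfLE _ : y ⟶ y) (𝟙 y), N.map_id]
      rfl
    · intro b _ hb
      by_cases h : b ≤ y
      · simp only [h, dif_pos, LinearMap.id_coe, id_eq]
        rw [hval b ⟨h⟩ hb, map_zero]
      · simp [h]
    · intro hy'; exact absurd (Finset.mem_univ y) hy'
  have hdiag : (v.1 : Cov N y) y ⟨le_refl y⟩ = 0 := by rw [← hsum, h0]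
  refine Subtype.ext ?_
  funext x h
  by_cases hxy : x = y
  · subst hxy
    rw [Subsingleton.elim h ⟨le_refl x⟩]
    exact hdiag
  · exact hval x h hxy

lemma cover_triv (N : P ⥤ FGModuleCat.{v} k) (h : ∀ (y : P) (v : N.obj y), v = 0)
    (y : P) (v : (cover N).obj y) : v = 0 := by
  funext x hx
  exact (h x ((v : Cov N y) x hx)).trans rfl

/-- the iterated-kernel sequence -/
def Rseq (M : P ⥤ FGModuleCat.{v} k) : ℕ → (P ⥤ FGModuleCat.{v} k)
  | 0 => M
  | (i + 1) => kerF (eps (Rseq M i))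

end
end S19

open CategoryTheory -- aux


/-!
STATEMENT 19: Every `kP`-module `M` over a finite poset `P` admits a projective resolution
of finite length, bounded by the length of the longest chain in `P`. Exactness in the
abelian category of `kP`-modules is computed objectwise.
-/

open CategoryTheory

theorem statement19 (k : Type) [Field k] (P : Type) [Fintype P] [PartialOrder P]
    (M : P ⥤ FGModuleCat k)
    -- `n` bounds the length of the longest chain in `P`: every strictly increasing chain
    -- `x_0 < x_1 < ⋯ < x_m` (a list of `m + 1` elements) has `m ≤ n`
    (n : ℕ) (hn : ∀ l : List P, l.Chain' (· < ·) → l.length ≤ n + 1) :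
    -- there is an exact sequence `0 → Q_n → ⋯ → Q_1 → Q_0 → M → 0` of `kP`-modules
    -- in which every `Q_i` is projective
    ∃ (Q : ℕ → (P ⥤ FGModuleCat k)) (d : ∀ i : ℕ, Q (i + 1) ⟶ Q i) (ε : Q 0 ⟶ M),
      -- each `Q_i` is a projective object of the category of `kP`-modules
      (∀ i : ℕ, Projective (Q i)) ∧
      -- the resolution has length at most `n`
      (∀ i : ℕ, n < i → Limits.IsZero (Q i)) ∧
      -- exactness at `M`: `ε` is (objectwise) an epimorphism
      (∀ x : P, Function.Surjective (ε.app x)) ∧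
      -- exactness at `Q_0`
      (∀ x : P, LinearMap.range (((d 0).app x).hom.hom : (Q 1).obj x →ₗ[k] (Q 0).obj x)
        = LinearMap.ker ((ε.app x).hom.hom : (Q 0).obj x →ₗ[k] M.obj x)) ∧
      -- exactness at `Q_{i+1}` (for `i + 1 ≤ n` this is exactness in the middle; at the
      -- top, where `Q_{i+2} = 0`, it expresses injectivity of `Q_{n} → Q_{n-1}`)
      (∀ (i : ℕ) (x : P),
        LinearMap.range (((d (i + 1)).app x).hom.hom : (Q (i + 2)).obj x →ₗ[k] (Q (i + 1)).obj x)
          = LinearMap.ker (((d i).app x).hom.hom : (Q (i + 1)).obj x →ₗ[k] (Q i).obj x)) := by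
  classical
  let R : ℕ → (P ⥤ FGModuleCat k) := S19.Rseq M
  have htle : ∀ y : P, S19.ht y ≤ n := by
    intro y
    obtain ⟨l, hl, hlen, _⟩ := S19.exists_chain y
    have := hn l hl
    omega
  have triv : ∀ (j : ℕ) (y : P), S19.ht y < j → ∀ v : (R j).obj y, v = 0 := by
    intro j
    induction j with
    | zero => exact fun y hy => absurd hy (Nat.not_lt_zero _)
    | succ j ihj => exact S19.ker_eps_triv (R j) j ihj
  refine ⟨fun i => S19.cover (R i),
    fun i => S19.eps (R (i + 1)) ≫ S19.kerIncl (S19.eps (R i)),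
    S19.eps M, ?_, ?_, ?_, ?_, ?_⟩
  · exact fun i => S19.cover_projective (R i)
  · intro i hi
    exact S19.isZero_of_triv _
      (S19.cover_triv (R i) (fun y v => triv i y (lt_of_le_of_lt (htle y) hi) v))
  · exact fun x => S19.eps_surjective M x
  · exact fun x => S19.range_d x
  · exact fun i x => (S19.range_d x).trans (S19.ker_d (S19.eps (R i)) x).symm
end
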